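/- arXiv:2307.04631 — 2 statements merged into one kernel-verified Lean document; each statement's English description precedes it below -/
import Mathlib

section
/- A permutation w ∈ S_n is a prism if and only if there exist a permutation v ∈ S_n and a letter i ∈ {1,…,n−1} such that: v ⪯ w in Bruhat order, supp(w) \ supp(v) = {i}, some reduced word of v is obtained by deleting one occurrence of i from some reduced word of w, and B(w) is order-isomorphic to C₂ × B(v) with the componentwise order. -/
/-- The adjacent transposition `σ_i`, swapping `i` and `i+1` (acting on `ℕ`). -/
def sigmaT (i : ℕ) : Equiv.Perm ℕ := Equiv.swap i (i + 1)

/-- The permutation given by a word (product of simple reflections, composed as functions). -/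
def wordProd (s : List ℕ) : Equiv.Perm ℕ := (s.map sigmaT).prod

/-- `s` is a word for `w` in `S_n`: all letters lie in `{1,…,n-1}` and the product is `w`. -/
def IsWord (n : ℕ) (w : Equiv.Perm ℕ) (s : List ℕ) : Prop :=
  (∀ j ∈ s, 1 ≤ j ∧ j ≤ n - 1) ∧ wordProd s = w

/-- `s` is a reduced word for `w`: a word of minimal length. -/
def IsReducedWord (n : ℕ) (w : Equiv.Perm ℕ) (s : List ℕ) : Prop :=
  IsWord n w s ∧ ∀ t : List ℕ, IsWord n w t → s.length ≤ t.length

/-- The Coxeter length `ℓ(w)`. -/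
noncomputable def ell (n : ℕ) (w : Equiv.Perm ℕ) : ℕ :=
  sInf {k | ∃ s : List ℕ, IsWord n w s ∧ s.length = k}

/-- The support of `w`: letters appearing in reduced words of `w`. -/
def supp (n : ℕ) (w : Equiv.Perm ℕ) : Set ℕ :=
  {i | ∃ s : List ℕ, IsReducedWord n w s ∧ i ∈ s}

/-- Bruhat order: some reduced word of `v` is a subsequence of some reduced word of `w`. -/
def BruhatLE (n : ℕ) (v w : Equiv.Perm ℕ) : Prop :=
  ∃ s t : List ℕ, IsReducedWord n v s ∧ IsReducedWord n w t ∧ s.Sublist t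

/-- The principal order ideal `B(w)`, as a type. -/
def IdealB (n : ℕ) (w : Equiv.Perm ℕ) : Type := {v : Equiv.Perm ℕ // BruhatLE n v w}

/-- The Bruhat order restricted to `B(w)`. -/
def IdealLE (n : ℕ) (w : Equiv.Perm ℕ) (a b : IdealB n w) : Prop := BruhatLE n a.1 b.1

/-- Two relations are isomorphic (order isomorphism of the corresponding ordered sets). -/
def RelIsomorphic {α β : Type*} (ra : α → α → Prop) (rb : β → β → Prop) : Prop :=
  ∃ e : α ≃ β, ∀ a b : α, ra a b ↔ rb (e a) (e b)

/-- `w` is a prism: `B(w) ≅ C₂ × X` for some partially ordered set `X`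
(the two-element chain `C₂` realized as `Bool`), with the componentwise order. -/
def IsPrism (n : ℕ) (w : Equiv.Perm ℕ) : Prop :=
  ∃ (X : Type) (rX : X → X → Prop), IsPartialOrder X rX ∧
    RelIsomorphic (IdealLE n w)
      (fun p q : Bool × X => (p.1 ≤ q.1) ∧ rX p.2 q.2)

/-- `w` belongs to `S_n`: it fixes every point outside `{1,…,n}`. -/
def MemSymm (n : ℕ) (w : Equiv.Perm ℕ) : Prop :=
  ∀ x : ℕ, x ∉ Set.Icc 1 n → w x = x

/-- `i` is unconfined in the word `s`: it appears exactly once, not between two copies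
of `i+1` and not between two copies of `i-1`. -/
def Unconfined (i : ℕ) (s : List ℕ) : Prop :=
  s.count i = 1 ∧ ∀ a b : List ℕ, s = a ++ i :: b →
    ¬((i + 1) ∈ a ∧ (i + 1) ∈ b) ∧ ¬((i - 1) ∈ a ∧ (i - 1) ∈ b)

/-- `B(w) ≅ C₂ × B(v)` with the componentwise order. -/
def IsoC2TimesIdeal (n : ℕ) (w v : Equiv.Perm ℕ) : Prop :=
  RelIsomorphic (IdealLE n w)
    (fun p q : Bool × IdealB n v => (p.1 ≤ q.1) ∧ IdealLE n v p.2 q.2)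

noncomputable section
open Classical

-- Section A : basics
@[simp] lemma sigmaT_mul_self (i : ℕ) : sigmaT i * sigmaT i = 1 := by
  simp [sigmaT, Equiv.swap_mul_self]

lemma sigmaT_apply_of_lt {i x : ℕ} (h : x < i) : sigmaT i x = x := by
  unfold sigmaT
  rw [Equiv.swap_apply_of_ne_of_ne] <;> omega

lemma sigmaT_apply_of_gt {i x : ℕ} (h : i + 1 < x) : sigmaT i x = x := by
  simp [sigmaT]
  rw [Equiv.swap_apply_of_ne_of_ne] <;> omega

@[simp] lemma sigmaT_apply_self (i : ℕ) : sigmaT i i = i + 1 := by simp [sigmaT]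
@[simp] lemma sigmaT_apply_succ (i : ℕ) : sigmaT i (i+1) = i := by simp [sigmaT]

lemma sigmaT_zero {i : ℕ} (h : 1 ≤ i) : sigmaT i 0 = 0 := sigmaT_apply_of_lt h

lemma sigmaT_mem_range {i x : ℕ} : sigmaT i x = x ∨ sigmaT i x = i ∨ sigmaT i x = i + 1 := by
  rcases lt_trichotomy x i with h | h | h
  · exact Or.inl (sigmaT_apply_of_lt h)
  · subst h; simp
  · rcases Nat.lt_or_ge (i+1) x with h' | h'
    · exact Or.inl (sigmaT_apply_of_gt h')
    · have : x = i + 1 := by omega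
      subst this; simp

lemma sigmaT_le_iff {i x y : ℕ} (hb : y ≤ i ∨ i + 2 ≤ y) : y ≤ sigmaT i x ↔ y ≤ x := by
  rcases lt_trichotomy x i with h | h | h
  · rw [sigmaT_apply_of_lt h]
  · subst h; simp; omega
  · rcases Nat.lt_or_ge (i+1) x with h' | h'
    · rw [sigmaT_apply_of_gt h']
    · have : x = i + 1 := by omega
      subst this; simp; omega

@[simp] lemma wordProd_nil : wordProd [] = 1 := rfl
lemma wordProd_cons (i : ℕ) (s : List ℕ) : wordProd (i :: s) = sigmaT i * wordProd s := by
  simp [wordProd]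
lemma wordProd_append (s t : List ℕ) : wordProd (s ++ t) = wordProd s * wordProd t := by
  simp [wordProd]
lemma wordProd_concat (s : List ℕ) (i : ℕ) : wordProd (s ++ [i]) = wordProd s * sigmaT i := by
  simp [wordProd_append, wordProd]

lemma wordProd_zero {s : List ℕ} (h : ∀ j ∈ s, 1 ≤ j) : wordProd s 0 = 0 := by
  induction s with
  | nil => rfl
  | cons i t ih =>
      rw [wordProd_cons]
      simp only [Equiv.Perm.mul_apply]
      rw [ih (fun j hj => h j (List.mem_cons_of_mem _ hj)), sigmaT_zero (h i (by simp))]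

lemma memSymm_one (n : ℕ) : MemSymm n 1 := fun _ _ => rfl

lemma memSymm_mul {n : ℕ} {u v : Equiv.Perm ℕ} (hu : MemSymm n u) (hv : MemSymm n v) :
    MemSymm n (u * v) := by
  intro x hx
  simp [Equiv.Perm.mul_apply, hv x hx, hu x hx]

lemma memSymm_sigmaT {n i : ℕ} (h1 : 1 ≤ i) (h2 : i ≤ n - 1) : MemSymm n (sigmaT i) := by
  intro x hx
  simp only [Set.mem_Icc, not_and_or, not_le] at hx
  have hn : i + 1 ≤ n := by omega
  rcases hx with hx | hx
  · exact sigmaT_apply_of_lt (by omega)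
  · exact sigmaT_apply_of_gt (by omega)

lemma isWord_memSymm {n : ℕ} {w : Equiv.Perm ℕ} {s : List ℕ} (h : IsWord n w s) :
    MemSymm n w := by
  obtain ⟨hl, hp⟩ := h
  subst hp
  induction s with
  | nil => exact memSymm_one n
  | cons i t ih =>
      rw [wordProd_cons]
      exact memSymm_mul (memSymm_sigmaT (hl i (by simp)).1 (hl i (by simp)).2)
        (ih (fun j hj => hl j (List.mem_cons_of_mem _ hj)))

lemma isWord_zero {n : ℕ} {w : Equiv.Perm ℕ} {s : List ℕ} (h : IsWord n w s) : w 0 = 0 := by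
  rw [← h.2]; exact wordProd_zero (fun j hj => (h.1 j hj).1)

lemma memSymm_zero {n : ℕ} {w : Equiv.Perm ℕ} (h : MemSymm n w) : w 0 = 0 :=
  h 0 (by simp)

lemma memSymm_maps {n : ℕ} {w : Equiv.Perm ℕ} (h : MemSymm n w) {x : ℕ}
    (hx : x ∈ Set.Icc 1 n) : w x ∈ Set.Icc 1 n := by
  by_contra hc
  have := h (w x) hc
  have : w (w x) = w x := this
  have hxx : w x = x := w.injective this
  rw [hxx] at hc; exact hc hx

lemma sigmaT_inj {i j : ℕ} (h : sigmaT i = sigmaT j) : i = j := by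
  by_contra hne
  have h1 := congrArg (fun e => e.toFun i) h
  simp [sigmaT, Equiv.swap_apply_def] at h1
  split_ifs at h1 <;> omega

lemma swap_eq_sigmaT_iff {a b i : ℕ} (hab : a < b) :
    Equiv.swap a b = sigmaT i ↔ a = i ∧ b = i + 1 := by
  constructor
  · intro h
    have h1 := congrArg (fun e => e.toFun i) h
    simp [sigmaT, Equiv.swap_apply_def] at h1
    split_ifs at h1 <;> omega
  · rintro ⟨rfl, rfl⟩; rfl

-- Section B : inversions
def invSet (w : Equiv.Perm ℕ) : Set (ℕ × ℕ) := {p | p.1 < p.2 ∧ w p.2 < w p.1}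
noncomputable def nInv (w : Equiv.Perm ℕ) : ℕ := (invSet w).ncard
def phiP (i : ℕ) (p : ℕ × ℕ) : ℕ × ℕ := (sigmaT i p.1, sigmaT i p.2)

lemma phiP_invol (i : ℕ) (p : ℕ × ℕ) : phiP i (phiP i p) = p := by
  simp [phiP, sigmaT]

lemma phiP_inj (i : ℕ) : Function.Injective (phiP i) :=
  Function.LeftInverse.injective (phiP_invol i)

lemma sigmaT_lt_sigmaT {i a b : ℕ} (h : a < b) (hne : ¬(a = i ∧ b = i + 1)) :
    sigmaT i a < sigmaT i b := by
  simp only [sigmaT, Equiv.swap_apply_def]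
  split_ifs <;> omega

lemma sigmaT_lt_iff {i y1 y2 : ℕ} (h1 : ¬(y1 = i ∧ y2 = i + 1)) (h2 : ¬(y1 = i + 1 ∧ y2 = i)) :
    sigmaT i y2 < sigmaT i y1 ↔ y2 < y1 := by
  simp only [sigmaT, Equiv.swap_apply_def]
  split_ifs <;> omega

@[simp] lemma invSet_one : invSet 1 = ∅ := by
  ext p; simp [invSet]; omega

@[simp] lemma nInv_one : nInv 1 = 0 := by simp [nInv]

-- right multiplication, ascent case
lemma invSet_mul_sigmaT_asc {w : Equiv.Perm ℕ} {i : ℕ} (h : w i < w (i + 1)) :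
    invSet (w * sigmaT i) = insert (i, i + 1) (phiP i '' invSet w) := by
  ext ⟨a, b⟩
  simp only [invSet, Set.mem_setOf_eq, Set.mem_insert_iff, Set.mem_image, Equiv.Perm.mul_apply]
  constructor
  · rintro ⟨hab, hlt⟩
    by_cases hc : a = i ∧ b = i + 1
    · left; rw [hc.1, hc.2]
    · right
      refine ⟨(sigmaT i a, sigmaT i b), ⟨sigmaT_lt_sigmaT hab hc, ?_⟩, ?_⟩
      · simpa [sigmaT] using hlt
      · simp [phiP, sigmaT]
  · rintro (heq | ⟨⟨qa, qb⟩, ⟨hq1, hq2⟩, hphi⟩)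
    · have ha : a = i := congrArg Prod.fst heq
      have hb : b = i + 1 := congrArg Prod.snd heq
      subst ha; subst hb
      refine ⟨by omega, ?_⟩
      simpa [sigmaT] using h
    · simp only [phiP, Prod.mk.injEq] at hphi
      obtain ⟨ha, hb⟩ := hphi
      subst ha; subst hb
      have hne : ¬(qa = i ∧ qb = i + 1) := by
        rintro ⟨rfl, rfl⟩
        simp only at hq2
        omega
      exact ⟨sigmaT_lt_sigmaT hq1 hne, by simpa [sigmaT] using hq2⟩

lemma not_mem_phiP_image {w : Equiv.Perm ℕ} {i : ℕ} :
    (i, i + 1) ∉ phiP i '' invSet w := by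
  rintro ⟨⟨qa, qb⟩, hq, hphi⟩
  simp only [phiP, Prod.mk.injEq] at hphi
  have h1 : qa = i + 1 := by
    have := hphi.1
    have : sigmaT i (sigmaT i qa) = sigmaT i i := by rw [this]
    simpa [sigmaT] using this
  have h2 : qb = i := by
    have := hphi.2
    have : sigmaT i (sigmaT i qb) = sigmaT i (i + 1) := by rw [this]
    simpa [sigmaT] using this
  have := hq.1
  omega

lemma finite_invSet_mul_sigmaT {w : Equiv.Perm ℕ} {i : ℕ} (hf : (invSet w).Finite) :
    (invSet (w * sigmaT i)).Finite := by
  apply Set.Finite.subset (Set.Finite.insert (i, i+1) (hf.image (phiP i)))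
  rintro ⟨a, b⟩ ⟨hab, hlt⟩
  by_cases hc : a = i ∧ b = i + 1
  · left; rw [hc.1, hc.2]
  · right
    refine ⟨(sigmaT i a, sigmaT i b), ⟨sigmaT_lt_sigmaT hab hc, ?_⟩, by simp [phiP, sigmaT]⟩
    simpa [sigmaT] using hlt

lemma nInv_mul_sigmaT_asc {w : Equiv.Perm ℕ} {i : ℕ} (hf : (invSet w).Finite)
    (h : w i < w (i + 1)) : nInv (w * sigmaT i) = nInv w + 1 := by
  rw [nInv, invSet_mul_sigmaT_asc h,
    Set.ncard_insert_of_notMem not_mem_phiP_image (hf.image _),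
    Set.ncard_image_of_injective _ (phiP_inj i)]
  rfl

lemma nInv_mul_sigmaT_desc {w : Equiv.Perm ℕ} {i : ℕ} (hf : (invSet w).Finite)
    (h : w (i + 1) < w i) : nInv w = nInv (w * sigmaT i) + 1 := by
  have hfw' : (invSet (w * sigmaT i)).Finite := finite_invSet_mul_sigmaT hf
  have hasc : (w * sigmaT i) i < (w * sigmaT i) (i + 1) := by
    simpa [Equiv.Perm.mul_apply, sigmaT] using h
  have := nInv_mul_sigmaT_asc hfw' hasc
  rw [mul_assoc, sigmaT_mul_self, mul_one] at this
  exact this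

-- left multiplication, ascent case
lemma invSet_sigmaT_mul_asc {w : Equiv.Perm ℕ} {i : ℕ} (h : w⁻¹ i < w⁻¹ (i + 1)) :
    invSet (sigmaT i * w) = insert (w⁻¹ i, w⁻¹ (i + 1)) (invSet w) := by
  ext ⟨a, b⟩
  simp only [invSet, Set.mem_setOf_eq, Set.mem_insert_iff, Equiv.Perm.mul_apply]
  constructor
  · rintro ⟨hab, hlt⟩
    by_cases hc1 : w a = i ∧ w b = i + 1
    · left
      have ha : a = w⁻¹ i := by rw [← hc1.1]; simp
      have hb : b = w⁻¹ (i + 1) := by rw [← hc1.2]; simp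
      rw [ha, hb]
    · by_cases hc2 : w a = i + 1 ∧ w b = i
      · exfalso
        rw [hc2.1, hc2.2] at hlt
        simp [sigmaT] at hlt
      · right
        exact ⟨hab, (sigmaT_lt_iff hc1 hc2).mp hlt⟩
  · rintro (heq | ⟨hab, hlt⟩)
    · have ha : a = w⁻¹ i := congrArg Prod.fst heq
      have hb : b = w⁻¹ (i + 1) := congrArg Prod.snd heq
      subst ha; subst hb
      refine ⟨h, ?_⟩
      simp [sigmaT]
    · refine ⟨hab, ?_⟩
      have hc1 : ¬(w a = i ∧ w b = i + 1) := by
        rintro ⟨h1, h2⟩; rw [h1, h2] at hlt; omega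
      have hc2 : ¬(w a = i + 1 ∧ w b = i) := by
        rintro ⟨h1, h2⟩
        have ha : a = w⁻¹ (i + 1) := by rw [← h1]; simp
        have hb : b = w⁻¹ i := by rw [← h2]; simp
        omega
      exact (sigmaT_lt_iff hc1 hc2).mpr hlt

lemma not_mem_invSet_pair {w : Equiv.Perm ℕ} {i : ℕ} :
    (w⁻¹ i, w⁻¹ (i + 1)) ∉ invSet w := by
  rintro ⟨_, hlt⟩
  simp at hlt

lemma nInv_sigmaT_mul_asc {w : Equiv.Perm ℕ} {i : ℕ} (hf : (invSet w).Finite)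
    (h : w⁻¹ i < w⁻¹ (i + 1)) : nInv (sigmaT i * w) = nInv w + 1 := by
  rw [nInv, invSet_sigmaT_mul_asc h, Set.ncard_insert_of_notMem not_mem_invSet_pair hf]
  rfl

lemma nInv_sigmaT_mul_desc {w : Equiv.Perm ℕ} {i : ℕ} (hf : (invSet w).Finite)
    (h : w⁻¹ (i + 1) < w⁻¹ i) : nInv w = nInv (sigmaT i * w) + 1 := by
  set w' := sigmaT i * w with hw'
  have hww : w = sigmaT i * w' := by rw [hw', ← mul_assoc, sigmaT_mul_self, one_mul]
  have hinv : w'⁻¹ i < w'⁻¹ (i + 1) := by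
    rw [hw']
    simp only [mul_inv_rev, Equiv.Perm.mul_apply]
    have hsinv : (sigmaT i)⁻¹ = sigmaT i := by
      rw [sigmaT]; exact Equiv.swap_inv i (i+1)
    rw [hsinv]
    simpa [sigmaT] using h
  have hset : invSet (sigmaT i * w') = insert (w'⁻¹ i, w'⁻¹ (i + 1)) (invSet w') :=
    invSet_sigmaT_mul_asc hinv
  have hfw' : (invSet w').Finite := by
    have : invSet w' ⊆ invSet w := by
      rw [hww, hset]; exact Set.subset_insert _ _
    exact hf.subset this
  have := nInv_sigmaT_mul_asc hfw' hinv
  rw [← hww] at this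
  exact this

lemma finite_invSet_sigmaT_mul {w : Equiv.Perm ℕ} {i : ℕ} (hf : (invSet w).Finite) :
    (invSet (sigmaT i * w)).Finite := by
  rcases lt_trichotomy (w⁻¹ i) (w⁻¹ (i + 1)) with h | h | h
  · rw [invSet_sigmaT_mul_asc h]
    exact hf.insert _
  · exfalso; exact absurd (w⁻¹.injective h) (by omega)
  · set w' := sigmaT i * w with hw'
    have hww : w = sigmaT i * w' := by rw [hw', ← mul_assoc, sigmaT_mul_self, one_mul]
    have hinv : w'⁻¹ i < w'⁻¹ (i + 1) := by
      rw [hw']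
      simp only [mul_inv_rev, Equiv.Perm.mul_apply]
      have hsinv : (sigmaT i)⁻¹ = sigmaT i := by
        rw [sigmaT]; exact Equiv.swap_inv i (i+1)
      rw [hsinv]
      simpa [sigmaT] using h
    have hset : invSet (sigmaT i * w') = insert (w'⁻¹ i, w'⁻¹ (i + 1)) (invSet w') :=
      invSet_sigmaT_mul_asc hinv
    apply hf.subset
    rw [hww, hset]
    exact Set.subset_insert _ _

-- Section C : words and reduced words
lemma finite_invSet_word (s : List ℕ) : (invSet (wordProd s)).Finite := by
  induction s using List.reverseRecOn with
  | nil => simp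
  | append_singleton t i ih =>
      rw [wordProd_concat]
      exact finite_invSet_mul_sigmaT ih

lemma nInv_word_le (s : List ℕ) : nInv (wordProd s) ≤ s.length := by
  induction s using List.reverseRecOn with
  | nil => simp
  | append_singleton t i ih =>
      rw [wordProd_concat, List.length_append, List.length_singleton]
      rcases lt_trichotomy (wordProd t i) (wordProd t (i + 1)) with h | h | h
      · rw [nInv_mul_sigmaT_asc (finite_invSet_word t) h]; omega
      · exact absurd ((wordProd t).injective h) (by omega)
      · have := nInv_mul_sigmaT_desc (finite_invSet_word t) h
        omega

lemma finite_invSet_memSymm {n : ℕ} {w : Equiv.Perm ℕ} (h : MemSymm n w) :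
    (invSet w).Finite := by
  apply Set.Finite.subset (Set.finite_Icc (0, 0) (n, n))
  rintro ⟨a, b⟩ ⟨hab, hlt⟩
  dsimp only at hab hlt
  simp only [Set.mem_Icc, Prod.mk_le_mk]
  have hb : b ≤ n := by
    by_contra hbn
    push_neg at hbn
    have hwb : w b = b := h b (by simp; omega)
    rw [hwb] at hlt
    -- w a > b > a, while a=0 or a ∈ Icc 1 n gives w a ≤ n < b, or w a = a < b
    rcases Nat.eq_zero_or_pos a with ha0 | hap
    · subst ha0
      rw [memSymm_zero h] at hlt; omega
    · by_cases han : a ≤ n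
      · have := memSymm_maps h (x := a) (by simp; omega)
        simp at this; omega
      · have hwa : w a = a := h a (by simp; omega)
        omega
  exact ⟨⟨by omega, by omega⟩, by omega, by omega⟩

lemma exists_descent {n : ℕ} {w : Equiv.Perm ℕ} (h : MemSymm n w) (hne : w ≠ 1) :
    ∃ i, 1 ≤ i ∧ i ≤ n - 1 ∧ w (i + 1) < w i := by
  by_contra hc
  push_neg at hc
  have hasc : ∀ i, 1 ≤ i → i ≤ n - 1 → w i < w (i + 1) := by
    intro i h1 h2
    have := hc i h1 h2
    have hne' : w i ≠ w (i + 1) := fun he => by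
      have := w.injective he; omega
    omega
  have hup : ∀ m x, 1 ≤ x → x ≤ n → x = m + 1 → x ≤ w x := by
    intro m
    induction m with
    | zero =>
        intro x h1 h2 h3
        have hx1 : x = 1 := by omega
        subst hx1
        have := memSymm_maps h (x := 1) (by simp; omega)
        simp at this; omega
    | succ k ih =>
        intro x h1 h2 h3
        subst h3
        have hk : k + 1 ≤ w (k + 1) := ih (k + 1) (by omega) (by omega) rfl
        have := hasc (k + 1) (by omega) (by omega)
        omega
  have hdn : ∀ m x, 1 ≤ x → x + m = n → w x ≤ x := by
    intro m
    induction m with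
    | zero =>
        intro x h1 h2
        have := memSymm_maps h (x := x) (by simp; omega)
        simp at this; omega
    | succ k ih =>
        intro x h1 h2
        have hk : w (x + 1) ≤ x + 1 := ih (x + 1) (by omega) (by omega)
        have := hasc x (by omega) (by omega)
        omega
  apply hne
  apply Equiv.ext
  intro x
  by_cases hx : 1 ≤ x ∧ x ≤ n
  · have h1 := hup (x - 1) x hx.1 hx.2 (by omega)
    have h2 := hdn (n - x) x hx.1 (by omega)
    simp; omega
  · have := h x (by simp; omega)
    simpa using this

lemma bubble {n : ℕ} {w : Equiv.Perm ℕ} (h : MemSymm n w) :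
    ∃ s : List ℕ, IsWord n w s ∧ s.length = nInv w := by
  generalize hk : nInv w = k
  induction k using Nat.strong_induction_on generalizing w with
  | _ k ih =>
      by_cases hw1 : w = 1
      · subst hw1
        exact ⟨[], ⟨by simp, rfl⟩, by simpa using hk⟩
      · obtain ⟨i, hi1, hi2, hdesc⟩ := exists_descent h hw1
        have hfin := finite_invSet_memSymm h
        have hstep := nInv_mul_sigmaT_desc hfin hdesc
        have hW' : MemSymm n (w * sigmaT i) := memSymm_mul h (memSymm_sigmaT hi1 hi2)
        have hlt : nInv (w * sigmaT i) < k := by omega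
        obtain ⟨s', ⟨hl', hp'⟩, hlen'⟩ := ih (nInv (w * sigmaT i)) hlt hW' rfl
        refine ⟨s' ++ [i], ⟨?_, ?_⟩, ?_⟩
        · intro j hj
          rcases List.mem_append.mp hj with hj | hj
          · exact hl' j hj
          · simp at hj; subst hj; exact ⟨hi1, hi2⟩
        · rw [wordProd_concat, hp', mul_assoc, sigmaT_mul_self, mul_one]
        · rw [List.length_append, List.length_singleton, hlen']; omega

lemma isReducedWord_iff {n : ℕ} {w : Equiv.Perm ℕ} {s : List ℕ} :
    IsReducedWord n w s ↔ IsWord n w s ∧ s.length = nInv w := by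
  constructor
  · rintro ⟨hw, hmin⟩
    obtain ⟨t, ht, hlen⟩ := bubble (isWord_memSymm hw)
    have h1 : s.length ≤ t.length := hmin t ht
    have h2 : nInv w ≤ s.length := by
      have := nInv_word_le s
      rw [hw.2] at this
      exact this
    exact ⟨hw, by omega⟩
  · rintro ⟨hw, hlen⟩
    refine ⟨hw, fun t ht => ?_⟩
    have := nInv_word_le t
    rw [ht.2] at this
    omega

lemma exists_reducedWord {n : ℕ} {w : Equiv.Perm ℕ} (h : MemSymm n w) :
    ∃ s, IsReducedWord n w s := by
  obtain ⟨s, hs, hlen⟩ := bubble h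
  exact ⟨s, isReducedWord_iff.mpr ⟨hs, hlen⟩⟩

lemma isReducedWord_nil {n : ℕ} : IsReducedWord n 1 [] :=
  ⟨⟨by simp, rfl⟩, fun t _ => by simp⟩

lemma reducedWord_one {n : ℕ} {s : List ℕ} (h : IsReducedWord n 1 s) : s = [] := by
  have := h.2 [] ⟨by simp, rfl⟩
  simp at this
  exact this

lemma nInv_eq_of_reduced {n : ℕ} {w : Equiv.Perm ℕ} {s : List ℕ} (h : IsReducedWord n w s) :
    nInv w = s.length := (isReducedWord_iff.mp h).2.symm

-- tail of a reduced word
lemma reduced_cons {n : ℕ} {i : ℕ} {t : List ℕ} {w : Equiv.Perm ℕ}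
    (h : IsReducedWord n w (i :: t)) :
    IsReducedWord n (wordProd t) t ∧ w = sigmaT i * wordProd t ∧
      nInv w = nInv (wordProd t) + 1 ∧
      (wordProd t)⁻¹ i < (wordProd t)⁻¹ (i + 1) := by
  obtain ⟨hl, hp⟩ := h.1
  have hw : w = sigmaT i * wordProd t := by rw [← hp, wordProd_cons]
  have hlen : (i :: t).length = nInv w := (isReducedWord_iff.mp h).2
  have htle : nInv (wordProd t) ≤ t.length := nInv_word_le t
  have hft : (invSet (wordProd t)).Finite := finite_invSet_word t
  -- trichotomy on positions
  rcases lt_trichotomy ((wordProd t)⁻¹ i) ((wordProd t)⁻¹ (i + 1)) with hpos | hpos | hpos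
  · have hasc := nInv_sigmaT_mul_asc hft hpos
    rw [← hw] at hasc
    have htred : t.length = nInv (wordProd t) := by
      simp only [List.length_cons] at hlen
      omega
    refine ⟨isReducedWord_iff.mpr ⟨⟨fun j hj => hl j (List.mem_cons_of_mem _ hj), rfl⟩, htred⟩,
      hw, by omega, hpos⟩
  · exact absurd ((wordProd t)⁻¹.injective hpos) (by omega)
  · have hdesc := nInv_sigmaT_mul_desc hft hpos
    rw [← hw] at hdesc
    simp only [List.length_cons] at hlen
    omega

-- Section D : rank matrix and dominance (Ehresmann) order
def rk (w : Equiv.Perm ℕ) (a b : ℕ) : ℕ :=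
  ((Finset.Icc 1 a).filter (fun x => b ≤ w x)).card
def DLE (v w : Equiv.Perm ℕ) : Prop := ∀ a b : ℕ, rk v a b ≤ rk w a b

lemma dle_refl (w : Equiv.Perm ℕ) : DLE w w := fun _ _ => le_rfl
lemma dle_trans {u v w : Equiv.Perm ℕ} (h1 : DLE u v) (h2 : DLE v w) : DLE u w :=
  fun a b => (h1 a b).trans (h2 a b)

lemma perm_inv_pos {w : Equiv.Perm ℕ} (h0 : w 0 = 0) {b : ℕ} (hb : 1 ≤ b) : 1 ≤ w⁻¹ b := by
  by_contra h
  have : w⁻¹ b = 0 := by omega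
  have : b = w 0 := by rw [← this]; simp
  omega

lemma rk_split (w : Equiv.Perm ℕ) (a b : ℕ) :
    rk w a b = rk w a (b + 1) + (if w⁻¹ b ∈ Finset.Icc 1 a then 1 else 0) := by
  classical
  unfold rk
  have h1 : (Finset.Icc 1 a).filter (fun x => b ≤ w x) =
      ((Finset.Icc 1 a).filter (fun x => b + 1 ≤ w x)) ∪
        ((Finset.Icc 1 a).filter (fun x => w x = b)) := by
    ext x
    simp only [Finset.mem_filter, Finset.mem_union]
    constructor
    · rintro ⟨hm, hb⟩
      rcases eq_or_lt_of_le hb with he | hl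
      · exact Or.inr ⟨hm, he.symm⟩
      · exact Or.inl ⟨hm, hl⟩
    · rintro (⟨hm, hb⟩ | ⟨hm, hb⟩)
      · exact ⟨hm, by omega⟩
      · exact ⟨hm, by omega⟩
  have hdisj : Disjoint ((Finset.Icc 1 a).filter (fun x => b + 1 ≤ w x))
      ((Finset.Icc 1 a).filter (fun x => w x = b)) := by
    rw [Finset.disjoint_left]
    intro x hx hy
    simp only [Finset.mem_filter] at hx hy
    omega
  have h2 : (Finset.Icc 1 a).filter (fun x => w x = b) =
      if w⁻¹ b ∈ Finset.Icc 1 a then {w⁻¹ b} else ∅ := by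
    split_ifs with h
    · ext x
      simp only [Finset.mem_filter, Finset.mem_singleton]
      constructor
      · rintro ⟨hm, he⟩
        rw [← he]; simp
      · rintro rfl
        exact ⟨h, by simp⟩
    · ext x
      simp only [Finset.mem_filter, Finset.notMem_empty, iff_false]
      rintro ⟨hm, he⟩
      apply h
      have : x = w⁻¹ b := by rw [← he]; simp
      rwa [← this]
  rw [h1, Finset.card_union_of_disjoint hdisj, h2]
  split_ifs <;> simp

lemma rk_succ (w : Equiv.Perm ℕ) (a b : ℕ) :
    rk w (a + 1) b = rk w a b + (if b ≤ w (a + 1) then 1 else 0) := by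
  classical
  unfold rk
  have h1 : Finset.Icc 1 (a + 1) = insert (a + 1) (Finset.Icc 1 a) := by
    ext x; simp [Finset.mem_Icc]; omega
  rw [h1, Finset.filter_insert]
  split_ifs with h
  · rw [Finset.card_insert_of_notMem (by simp only [Finset.mem_filter, Finset.mem_Icc]; omega)]
  · omega

lemma rk_sigmaT_mul_of_le {w : Equiv.Perm ℕ} {i b : ℕ} (hb : b ≤ i ∨ i + 2 ≤ b) (a : ℕ) :
    rk (sigmaT i * w) a b = rk w a b := by
  unfold rk
  congr 1
  apply Finset.filter_congr
  intro x _
  simp only [Equiv.Perm.mul_apply, eq_iff_iff]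
  exact sigmaT_le_iff hb

lemma rk_sigmaT_mul_mid (w : Equiv.Perm ℕ) (i a : ℕ) :
    rk (sigmaT i * w) a (i + 1) =
      rk w a (i + 2) + (if w⁻¹ i ∈ Finset.Icc 1 a then 1 else 0) := by
  classical
  unfold rk
  have h1 : (Finset.Icc 1 a).filter (fun x => i + 1 ≤ (sigmaT i * w) x) =
      ((Finset.Icc 1 a).filter (fun x => i + 2 ≤ w x)) ∪
        ((Finset.Icc 1 a).filter (fun x => w x = i)) := by
    ext x
    simp only [Finset.mem_filter, Finset.mem_union]
    simp only [Equiv.Perm.mul_apply]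
    have key : i + 1 ≤ sigmaT i (w x) ↔ (i + 2 ≤ w x ∨ w x = i) := by
      generalize w x = y
      rcases lt_trichotomy y i with h | h | h
      · rw [sigmaT_apply_of_lt h]; omega
      · subst h; rw [sigmaT_apply_self]; omega
      · rcases Nat.lt_or_ge (i + 1) y with h' | h'
        · rw [sigmaT_apply_of_gt h']; omega
        · have hy : y = i + 1 := by omega
          subst hy; rw [sigmaT_apply_succ]; omega
    constructor
    · rintro ⟨hm, hb⟩
      rcases key.mp hb with h | h
      · exact Or.inl ⟨hm, h⟩
      · exact Or.inr ⟨hm, h⟩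
    · rintro (⟨hm, hb⟩ | ⟨hm, hb⟩)
      · exact ⟨hm, key.mpr (Or.inl hb)⟩
      · exact ⟨hm, key.mpr (Or.inr hb)⟩
  have hdisj : Disjoint ((Finset.Icc 1 a).filter (fun x => i + 2 ≤ w x))
      ((Finset.Icc 1 a).filter (fun x => w x = i)) := by
    rw [Finset.disjoint_left]
    intro x hx hy
    simp only [Finset.mem_filter] at hx hy
    omega
  have h2 : (Finset.Icc 1 a).filter (fun x => w x = i) =
      if w⁻¹ i ∈ Finset.Icc 1 a then {w⁻¹ i} else ∅ := by
    split_ifs with h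
    · ext x
      simp only [Finset.mem_filter, Finset.mem_singleton]
      constructor
      · rintro ⟨hm, he⟩; rw [← he]; simp
      · rintro rfl; exact ⟨h, by simp⟩
    · ext x
      simp only [Finset.mem_filter, Finset.notMem_empty, iff_false]
      rintro ⟨hm, he⟩
      apply h
      have : x = w⁻¹ i := by rw [← he]; simp
      rwa [← this]
  rw [h1, Finset.card_union_of_disjoint hdisj, h2]
  split_ifs <;> simp

-- Section D2 : lifting lemmas for the dominance order
section Lifting
variable {u z v w x : Equiv.Perm ℕ} {i : ℕ}

lemma dle_L1 (hi : 1 ≤ i) (hz0 : z 0 = 0) (hasc : z⁻¹ i < z⁻¹ (i + 1)) :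
    DLE z (sigmaT i * z) := by
  intro a b
  rcases (by omega : b ≤ i ∨ b = i + 1 ∨ i + 2 ≤ b) with hb | hb | hb
  · rw [rk_sigmaT_mul_of_le (Or.inl hb)]
  · subst hb
    rw [rk_sigmaT_mul_mid]
    have hz1 : 1 ≤ z⁻¹ i := perm_inv_pos hz0 hi
    have hz2 : 1 ≤ z⁻¹ (i + 1) := perm_inv_pos hz0 (by omega)
    have Ez1 := rk_split z a (i + 1)
    simp only [show i + 1 + 1 = i + 2 from rfl] at Ez1
    simp only [Finset.mem_Icc] at *
    split_ifs at * <;> omega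
  · rw [rk_sigmaT_mul_of_le (Or.inr hb)]

lemma dle_L2 (hi : 1 ≤ i) (hu0 : u 0 = 0) (hz0 : z 0 = 0)
    (h : DLE u z) (hasc : z⁻¹ i < z⁻¹ (i + 1)) : DLE (sigmaT i * u) (sigmaT i * z) := by
  intro a b
  rcases (by omega : b ≤ i ∨ b = i + 1 ∨ i + 2 ≤ b) with hb | hb | hb
  · rw [rk_sigmaT_mul_of_le (Or.inl hb), rk_sigmaT_mul_of_le (Or.inl hb)]; exact h a b
  · subst hb
    rw [rk_sigmaT_mul_mid, rk_sigmaT_mul_mid]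
    have hu1 : 1 ≤ u⁻¹ i := perm_inv_pos hu0 hi
    have hu2 : 1 ≤ u⁻¹ (i + 1) := perm_inv_pos hu0 (by omega)
    have hz1 : 1 ≤ z⁻¹ i := perm_inv_pos hz0 hi
    have hz2 : 1 ≤ z⁻¹ (i + 1) := perm_inv_pos hz0 (by omega)
    have Eu2 := rk_split u a i
    have Eu1 := rk_split u a (i + 1)
    have Ez2 := rk_split z a i
    have Ez1 := rk_split z a (i + 1)
    simp only [show i + 1 + 1 = i + 2 from rfl] at Eu1 Ez1
    have H0 := h a i
    have H1 := h a (i + 1)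
    have H2 := h a (i + 2)
    simp only [Finset.mem_Icc] at *
    split_ifs at * <;> omega
  · rw [rk_sigmaT_mul_of_le (Or.inr hb), rk_sigmaT_mul_of_le (Or.inr hb)]; exact h a b

lemma dle_L3 (hi : 1 ≤ i) (hv0 : v 0 = 0) (hw0 : w 0 = 0)
    (h : DLE v w) (hwd : w⁻¹ (i + 1) < w⁻¹ i) (hvd : v⁻¹ (i + 1) < v⁻¹ i) :
    DLE (sigmaT i * v) (sigmaT i * w) := by
  intro a b
  rcases (by omega : b ≤ i ∨ b = i + 1 ∨ i + 2 ≤ b) with hb | hb | hb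
  · rw [rk_sigmaT_mul_of_le (Or.inl hb), rk_sigmaT_mul_of_le (Or.inl hb)]; exact h a b
  · subst hb
    rw [rk_sigmaT_mul_mid, rk_sigmaT_mul_mid]
    have hu1 : 1 ≤ v⁻¹ i := perm_inv_pos hv0 hi
    have hu2 : 1 ≤ v⁻¹ (i + 1) := perm_inv_pos hv0 (by omega)
    have hz1 : 1 ≤ w⁻¹ i := perm_inv_pos hw0 hi
    have hz2 : 1 ≤ w⁻¹ (i + 1) := perm_inv_pos hw0 (by omega)
    have Eu2 := rk_split v a i
    have Eu1 := rk_split v a (i + 1)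
    have Ez2 := rk_split w a i
    have Ez1 := rk_split w a (i + 1)
    simp only [show i + 1 + 1 = i + 2 from rfl] at Eu1 Ez1
    have H0 := h a i
    have H1 := h a (i + 1)
    have H2 := h a (i + 2)
    simp only [Finset.mem_Icc] at *
    split_ifs at * <;> omega
  · rw [rk_sigmaT_mul_of_le (Or.inr hb), rk_sigmaT_mul_of_le (Or.inr hb)]; exact h a b

lemma dle_L4 (hi : 1 ≤ i) (hv0 : v 0 = 0) (hw0 : w 0 = 0)
    (h : DLE v w) (hwd : w⁻¹ (i + 1) < w⁻¹ i) (hva : v⁻¹ i < v⁻¹ (i + 1)) :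
    DLE v (sigmaT i * w) := by
  intro a b
  rcases (by omega : b ≤ i ∨ b = i + 1 ∨ i + 2 ≤ b) with hb | hb | hb
  · rw [rk_sigmaT_mul_of_le (Or.inl hb)]; exact h a b
  · subst hb
    rw [rk_sigmaT_mul_mid]
    have hu1 : 1 ≤ v⁻¹ i := perm_inv_pos hv0 hi
    have hu2 : 1 ≤ v⁻¹ (i + 1) := perm_inv_pos hv0 (by omega)
    have hz1 : 1 ≤ w⁻¹ i := perm_inv_pos hw0 hi
    have hz2 : 1 ≤ w⁻¹ (i + 1) := perm_inv_pos hw0 (by omega)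
    have Eu2 := rk_split v a i
    have Eu1 := rk_split v a (i + 1)
    have Ez2 := rk_split w a i
    have Ez1 := rk_split w a (i + 1)
    simp only [show i + 1 + 1 = i + 2 from rfl] at Eu1 Ez1
    have H0 := h a i
    have H1 := h a (i + 1)
    have H2 := h a (i + 2)
    simp only [Finset.mem_Icc] at *
    split_ifs at * <;> omega
  · rw [rk_sigmaT_mul_of_le (Or.inr hb)]; exact h a b

lemma dle_L5 (hi : 1 ≤ i) (hx0 : x 0 = 0) (hz0 : z 0 = 0)
    (h : DLE x z) (hzd : z⁻¹ (i + 1) < z⁻¹ i) : DLE (sigmaT i * x) z := by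
  intro a b
  rcases (by omega : b ≤ i ∨ b = i + 1 ∨ i + 2 ≤ b) with hb | hb | hb
  · rw [rk_sigmaT_mul_of_le (Or.inl hb)]; exact h a b
  · subst hb
    rw [rk_sigmaT_mul_mid]
    have hu1 : 1 ≤ x⁻¹ i := perm_inv_pos hx0 hi
    have hu2 : 1 ≤ x⁻¹ (i + 1) := perm_inv_pos hx0 (by omega)
    have hz1 : 1 ≤ z⁻¹ i := perm_inv_pos hz0 hi
    have hz2 : 1 ≤ z⁻¹ (i + 1) := perm_inv_pos hz0 (by omega)
    have Eu2 := rk_split x a i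
    have Eu1 := rk_split x a (i + 1)
    have Ez2 := rk_split z a i
    have Ez1 := rk_split z a (i + 1)
    simp only [show i + 1 + 1 = i + 2 from rfl] at Eu1 Ez1
    have H0 := h a i
    have H1 := h a (i + 1)
    have H2 := h a (i + 2)
    simp only [Finset.mem_Icc] at *
    split_ifs at * <;> omega
  · rw [rk_sigmaT_mul_of_le (Or.inr hb)]; exact h a b

end Lifting

lemma dle_antisymm {v w : Equiv.Perm ℕ} (h1 : DLE v w) (h2 : DLE w v) : v = w := by
  have hrk : ∀ a b, rk v a b = rk w a b := fun a b => le_antisymm (h1 a b) (h2 a b)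
  have hpos : ∀ x, 1 ≤ x → v x = w x := by
    intro x hx
    obtain ⟨a, rfl⟩ : ∃ a, x = a + 1 := ⟨x - 1, by omega⟩
    have key : ∀ b, b ≤ v (a + 1) ↔ b ≤ w (a + 1) := by
      intro b
      have e1 := rk_succ v a b
      have e2 := rk_succ w a b
      have e3 := hrk a b
      have e4 := hrk (a + 1) b
      split_ifs at * <;> omega
    have h5 := (key (v (a + 1))).mp le_rfl
    have h6 := (key (w (a + 1))).mpr le_rfl
    omega
  apply Equiv.ext
  intro x
  rcases Nat.eq_zero_or_pos x with rfl | hx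
  · -- x = 0 : use injectivity
    by_contra hne
    have hv0 : ∀ y, 1 ≤ y → w y ≠ v 0 := by
      intro y hy he
      have : v y = v 0 := by rw [hpos y hy, he]
      have := v.injective this
      omega
    rcases Nat.eq_zero_or_pos (w⁻¹ (v 0)) with h0 | h0
    · apply hne
      have : w (w⁻¹ (v 0)) = v 0 := by simp
      rw [h0] at this
      exact this.symm
    · exact hv0 _ h0 (by simp)
  · exact hpos x hx

lemma dle_one {v : Equiv.Perm ℕ} (h : DLE v 1) (hv0 : v 0 = 0) : v = 1 := by
  by_contra hne
  have hex : ∃ x, v x ≠ x := by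
    by_contra hc
    push_neg at hc
    exact hne (Equiv.ext fun x => hc x)
  classical
  obtain ⟨m, hm, hmin⟩ := Nat.findX hex
  have hfix : ∀ y, y < m → v y = y := fun y hy => by
    by_contra hc; exact (hmin y hy) hc
  have hm1 : 1 ≤ m := by
    rcases Nat.eq_zero_or_pos m with rfl | h'
    · exact absurd hv0 hm
    · exact h'
  have hvm : m + 1 ≤ v m := by
    rcases lt_trichotomy (v m) m with h' | h' | h'
    · exfalso
      have : v (v m) = v m := hfix (v m) h'
      have := v.injective this
      omega
    · exact absurd h' hm
    · omega
  have hrkv : 1 ≤ rk v m (m + 1) := by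
    unfold rk
    refine Finset.card_pos.mpr ⟨m, ?_⟩
    simp only [Finset.mem_filter, Finset.mem_Icc]
    exact ⟨⟨hm1, le_rfl⟩, hvm⟩
  have hrk1 : rk 1 m (m + 1) = 0 := by
    unfold rk
    rw [Finset.card_eq_zero]
    ext x
    simp only [Finset.mem_filter, Finset.mem_Icc, Finset.notMem_empty, iff_false]
    rintro ⟨⟨_, hx2⟩, hx3⟩
    simp at hx3
    omega
  have := h m (m + 1)
  omega

-- Section E : the main structural theorems
lemma word_zero_of_isWord {n : ℕ} {w : Equiv.Perm ℕ} {s : List ℕ} (h : IsWord n w s) :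
    w 0 = 0 := isWord_zero h

lemma sigmaT_mul_sigmaT_mul (i : ℕ) (w : Equiv.Perm ℕ) : sigmaT i * (sigmaT i * w) = w := by
  rw [← mul_assoc, sigmaT_mul_self, one_mul]

-- T2: a subword of a reduced word is dominance-below
lemma subword_dle {n : ℕ} : ∀ {t s : List ℕ},
    IsReducedWord n (wordProd t) t → s.Sublist t → DLE (wordProd s) (wordProd t) := by
  intro t
  induction t with
  | nil =>
      intro s _ hs
      rw [List.sublist_nil.mp hs]
      exact dle_refl _
  | cons i t₁ ih =>
      intro s hred hs
      have hw : wordProd (i :: t₁) = sigmaT i * wordProd t₁ := wordProd_cons i t₁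
      obtain ⟨hred₁, -, -, hasc⟩ := reduced_cons (w := wordProd (i :: t₁)) (by exact hred)
      have hi : 1 ≤ i := (hred.1.1 i (by simp)).1
      have ht₁0 : wordProd t₁ 0 = 0 :=
        wordProd_zero (fun j hj => (hred.1.1 j (List.mem_cons_of_mem _ hj)).1)
      rcases List.sublist_cons_iff.mp hs with hc | ⟨r, rfl, hr⟩
      · have hle := ih hred₁ hc
        rw [hw]
        exact dle_trans hle (dle_L1 hi ht₁0 hasc)
      · have hle := ih hred₁ hr
        have hr0 : wordProd r 0 = 0 := by
          apply wordProd_zero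
          intro j hj
          exact (hred.1.1 j (List.mem_cons_of_mem _ (hr.subset hj))).1
        rw [hw, wordProd_cons]
        exact dle_L2 hi hr0 ht₁0 hle hasc

lemma bruhat_desc_of_reduced_cons {n : ℕ} {i : ℕ} {t₁ : List ℕ}
    (hred : IsReducedWord n (wordProd (i :: t₁)) (i :: t₁)) :
    (wordProd (i :: t₁))⁻¹ (i + 1) < (wordProd (i :: t₁))⁻¹ i := by
  obtain ⟨-, hw, -, hasc⟩ := reduced_cons (w := wordProd (i :: t₁)) hred
  rw [hw]
  simp only [mul_inv_rev, Equiv.Perm.mul_apply]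
  have hsinv : (sigmaT i)⁻¹ = sigmaT i := by rw [sigmaT]; exact Equiv.swap_inv i (i + 1)
  rw [hsinv]
  simpa using hasc

-- T1 : subword property (with respect to any given reduced word)
lemma dle_subword {n : ℕ} : ∀ {t : List ℕ} {w v : Equiv.Perm ℕ},
    IsReducedWord n w t → DLE v w → v 0 = 0 →
    ∃ s, IsReducedWord n v s ∧ s.Sublist t := by
  intro t
  induction t with
  | nil =>
      intro w v hred hdle hv0
      have hw : w = 1 := by rw [← hred.1.2]; rfl
      subst hw
      rw [dle_one hdle hv0]
      exact ⟨[], isReducedWord_nil, List.Sublist.refl []⟩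
  | cons i t₁ ih =>
      intro w v hred hdle hv0
      have hpw : wordProd (i :: t₁) = w := hred.1.2
      subst hpw
      obtain ⟨hred₁, hw, hninv, hasc⟩ := reduced_cons (w := wordProd (i :: t₁)) hred
      have hi : 1 ≤ i := (hred.1.1 i (by simp)).1
      have hin : i ≤ n - 1 := (hred.1.1 i (by simp)).2
      have ht₁0 : wordProd t₁ 0 = 0 :=
        wordProd_zero (fun j hj => (hred.1.1 j (List.mem_cons_of_mem _ hj)).1)
      have hw0 : wordProd (i :: t₁) 0 = 0 :=
        wordProd_zero (fun j hj => (hred.1.1 j hj).1)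
      have hdesc : (wordProd (i :: t₁))⁻¹ (i + 1) < (wordProd (i :: t₁))⁻¹ i :=
        bruhat_desc_of_reduced_cons hred
      have hsw : sigmaT i * wordProd (i :: t₁) = wordProd t₁ := by
        rw [hw, sigmaT_mul_sigmaT_mul]
      rcases lt_trichotomy (v⁻¹ i) (v⁻¹ (i + 1)) with hva | hveq | hvd
      · -- v ascent: v ≤ w₁
        have hdle₁ : DLE v (wordProd t₁) := by
          rw [← hsw]
          exact dle_L4 hi hv0 hw0 hdle hdesc hva
        obtain ⟨s, hsred, hssub⟩ := ih hred₁ hdle₁ hv0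
        exact ⟨s, hsred, hssub.cons i⟩
      · exact absurd (v⁻¹.injective hveq) (by omega)
      · -- v descent: σᵢ v ≤ w₁
        have hdle₁ : DLE (sigmaT i * v) (wordProd t₁) := by
          rw [← hsw]
          exact dle_L3 hi hv0 hw0 hdle hdesc hvd
        have hsv0 : (sigmaT i * v) 0 = 0 := by
          simp only [Equiv.Perm.mul_apply, hv0]
          exact sigmaT_zero hi
        obtain ⟨s₁, hs₁red, hs₁sub⟩ := ih hred₁ hdle₁ hsv0
        refine ⟨i :: s₁, ?_, List.cons_sublist_cons.mpr hs₁sub⟩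
        have hprod : wordProd (i :: s₁) = v := by
          rw [wordProd_cons, hs₁red.1.2, sigmaT_mul_sigmaT_mul]
        have hvfin : (invSet v).Finite := by
          rw [← hprod]; exact finite_invSet_word _
        have hinv : nInv v = nInv (sigmaT i * v) + 1 := nInv_sigmaT_mul_desc hvfin hvd
        refine isReducedWord_iff.mpr ⟨⟨?_, hprod⟩, ?_⟩
        · intro j hj
          rcases List.mem_cons.mp hj with rfl | hj
          · exact ⟨hi, hin⟩
          · exact hs₁red.1.1 j hj
        · have : s₁.length = nInv (sigmaT i * v) := (isReducedWord_iff.mp hs₁red).2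
          simp only [List.length_cons]
          omega

-- T3 : chain property
lemma dle_chain {n : ℕ} : ∀ {t : List ℕ} {w v : Equiv.Perm ℕ},
    IsReducedWord n w t → DLE v w → v 0 = 0 → v ≠ w →
    ∃ u su, IsReducedWord n u su ∧ DLE v u ∧ DLE u w ∧ su.length + 1 = t.length := by
  intro t
  induction t with
  | nil =>
      intro w v hred hdle hv0 hne
      have hw : w = 1 := by rw [← hred.1.2]; rfl
      subst hw
      exact absurd (dle_one hdle hv0) hne
  | cons i t₁ ih =>
      intro w v hred hdle hv0 hne
      have hpw : wordProd (i :: t₁) = w := hred.1.2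
      subst hpw
      obtain ⟨hred₁, hw, hninv, hasc⟩ := reduced_cons (w := wordProd (i :: t₁)) hred
      have hi : 1 ≤ i := (hred.1.1 i (by simp)).1
      have hin : i ≤ n - 1 := (hred.1.1 i (by simp)).2
      have ht₁0 : wordProd t₁ 0 = 0 :=
        wordProd_zero (fun j hj => (hred.1.1 j (List.mem_cons_of_mem _ hj)).1)
      have hw0 : wordProd (i :: t₁) 0 = 0 :=
        wordProd_zero (fun j hj => (hred.1.1 j hj).1)
      have hdesc : (wordProd (i :: t₁))⁻¹ (i + 1) < (wordProd (i :: t₁))⁻¹ i :=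
        bruhat_desc_of_reduced_cons hred
      have hsw : sigmaT i * wordProd (i :: t₁) = wordProd t₁ := by
        rw [hw, sigmaT_mul_sigmaT_mul]
      have hW₁W : DLE (wordProd t₁) (wordProd (i :: t₁)) := by
        rw [hw]; exact dle_L1 hi ht₁0 hasc
      rcases lt_trichotomy (v⁻¹ i) (v⁻¹ (i + 1)) with hva | hveq | hvd
      · -- v ascent at i : take u = w₁
        refine ⟨wordProd t₁, t₁, hred₁, ?_, hW₁W, by simp⟩
        rw [← hsw]
        exact dle_L4 hi hv0 hw0 hdle hdesc hva
      · exact absurd (v⁻¹.injective hveq) (by omega)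
      · -- v descent at i
        have hdle₁ : DLE (sigmaT i * v) (wordProd t₁) := by
          rw [← hsw]
          exact dle_L3 hi hv0 hw0 hdle hdesc hvd
        have hsv0 : (sigmaT i * v) 0 = 0 := by
          simp only [Equiv.Perm.mul_apply, hv0]
          exact sigmaT_zero hi
        by_cases heq : sigmaT i * v = wordProd t₁
        · exfalso
          apply hne
          rw [hw, ← heq, sigmaT_mul_sigmaT_mul]
        · obtain ⟨u₁, su₁, hu₁red, hvu₁, hu₁w₁, hlen₁⟩ := ih hred₁ hdle₁ hsv0 heq
          have hu₁0 : u₁ 0 = 0 := by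
            rw [← hu₁red.1.2]
            exact wordProd_zero (fun j hj => (hu₁red.1.1 j hj).1)
          have hu₁fin : (invSet u₁).Finite := by
            rw [← hu₁red.1.2]; exact finite_invSet_word _
          rcases lt_trichotomy (u₁⁻¹ i) (u₁⁻¹ (i + 1)) with hua | hueq | hud
          · -- u₁ ascent : take u = σᵢ u₁
            refine ⟨sigmaT i * u₁, i :: su₁, ?_, ?_, ?_, ?_⟩
            · refine isReducedWord_iff.mpr ⟨⟨?_, ?_⟩, ?_⟩
              · intro j hj
                rcases List.mem_cons.mp hj with rfl | hj
                · exact ⟨hi, hin⟩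
                · exact hu₁red.1.1 j hj
              · rw [wordProd_cons, hu₁red.1.2]
              · have h1 : nInv (sigmaT i * u₁) = nInv u₁ + 1 := nInv_sigmaT_mul_asc hu₁fin hua
                have h2 : su₁.length = nInv u₁ := (isReducedWord_iff.mp hu₁red).2
                simp only [List.length_cons]
                omega
            · have := dle_L2 hi hsv0 hu₁0 hvu₁ hua
              rwa [sigmaT_mul_sigmaT_mul] at this
            · have := dle_L2 hi hu₁0 ht₁0 hu₁w₁ hasc
              rwa [← hw] at this
            · simp only [List.length_cons]; omega
          · exact absurd (u₁⁻¹.injective hueq) (by omega)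
          · -- u₁ descent : take u = w₁
            refine ⟨wordProd t₁, t₁, hred₁, ?_, hW₁W, by simp⟩
            have hvd' : DLE (sigmaT i * (sigmaT i * v)) u₁ := dle_L5 hi hsv0 hu₁0 hvu₁ hud
            rw [sigmaT_mul_sigmaT_mul] at hvd'
            exact dle_trans hvd' hu₁w₁

-- T4 : a sublist one shorter is a single deletion
lemma sublist_single_deletion : ∀ {s t : List ℕ}, s.Sublist t → s.length + 1 = t.length →
    ∃ (a : List ℕ) (i : ℕ) (b : List ℕ), t = a ++ i :: b ∧ s = a ++ b := by
  intro s t h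
  induction h with
  | slnil => intro h; simp at h
  | @cons l₁ l₂ a h ih =>
      intro hlen
      have : l₁.length = l₂.length := by
        have := h.length_le
        simp only [List.length_cons] at hlen
        omega
      have heq : l₁ = l₂ := h.eq_of_length this
      exact ⟨[], a, l₂, by simp, by simp [heq]⟩
  | @cons_cons l₁ l₂ a h ih =>
      intro hlen
      simp only [List.length_cons] at hlen
      obtain ⟨c, i, d, hc, hd⟩ := ih (by omega)
      exact ⟨a :: c, i, d, by simp [hc], by simp [hd]⟩

lemma bruhatLE'_dle {n : ℕ} {v w : Equiv.Perm ℕ} (h : BruhatLE n v w) : DLE v w := by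
  obtain ⟨s, t, hs, ht, hsub⟩ := h
  have h1 : wordProd s = v := hs.1.2
  have h2 : wordProd t = w := ht.1.2
  have := subword_dle (n := n) (t := t) (s := s) (by rw [h2]; exact ht) hsub
  rwa [h1, h2] at this

lemma bruhatLE'_of_dle {n : ℕ} {v w : Equiv.Perm ℕ} {t : List ℕ}
    (htred : IsReducedWord n w t) (hdle : DLE v w) (hv0 : v 0 = 0) : BruhatLE n v w := by
  have h2 : wordProd t = w := htred.1.2
  obtain ⟨s, hsred, hssub⟩ := dle_subword (w := w) htred hdle hv0
  exact ⟨s, t, hsred, htred, hssub⟩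

lemma bruhatLE'_zero {n : ℕ} {v w : Equiv.Perm ℕ} (h : BruhatLE n v w) : v 0 = 0 := by
  obtain ⟨s, t, hs, ht, hsub⟩ := h
  exact isWord_zero hs.1

lemma bruhatLE'_refl {n : ℕ} {w : Equiv.Perm ℕ} {t : List ℕ} (ht : IsReducedWord n w t) :
    BruhatLE n w w := ⟨t, t, ht, ht, List.Sublist.refl t⟩

lemma bruhatLE'_trans {n : ℕ} {x y z : Equiv.Perm ℕ} (h1 : BruhatLE n x y)
    (h2 : BruhatLE n y z) : BruhatLE n x z := by
  have hdle := dle_trans (bruhatLE'_dle h1) (bruhatLE'_dle h2)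
  have hz0 := bruhatLE'_zero h1
  obtain ⟨s, t, hs, ht, hsub⟩ := h2
  exact bruhatLE'_of_dle ht hdle hz0

lemma bruhatLE'_antisymm {n : ℕ} {x y : Equiv.Perm ℕ} (h1 : BruhatLE n x y)
    (h2 : BruhatLE n y x) : x = y :=
  dle_antisymm (bruhatLE'_dle h1) (bruhatLE'_dle h2)

lemma bruhatLE'_one {n : ℕ} {w : Equiv.Perm ℕ} {t : List ℕ} (ht : IsReducedWord n w t) :
    BruhatLE n 1 w := ⟨[], t, isReducedWord_nil, ht, List.nil_sublist t⟩

lemma nInv_sigmaT (j : ℕ) : nInv (sigmaT j) = 1 := by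
  have h : (1 : Equiv.Perm ℕ) j < (1 : Equiv.Perm ℕ) (j + 1) := by simp
  have := nInv_mul_sigmaT_asc (w := 1) (by simp) h
  rwa [one_mul, nInv_one] at this

lemma isReducedWord_sigmaT {n j : ℕ} (h1 : 1 ≤ j) (h2 : j ≤ n - 1) :
    IsReducedWord n (sigmaT j) [j] := by
  refine isReducedWord_iff.mpr ⟨⟨?_, ?_⟩, ?_⟩
  · intro k hk; simp at hk; subst hk; exact ⟨h1, h2⟩
  · simp [wordProd]
  · simp [nInv_sigmaT]

lemma sigmaT_ne_one (j : ℕ) : sigmaT j ≠ 1 := by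
  intro h
  have := congrArg (fun e => e.toFun j) h
  simp at this

lemma reducedWord_sigmaT_eq {n j : ℕ} {s : List ℕ} (h : IsReducedWord n (sigmaT j) s) :
    s = [j] := by
  have hlen : s.length = 1 := by
    rw [(isReducedWord_iff.mp h).2, nInv_sigmaT]
  obtain ⟨k, rfl⟩ := List.length_eq_one_iff.mp hlen
  have : wordProd [k] = sigmaT j := h.1.2
  simp [wordProd] at this
  rw [sigmaT_inj this]

-- support lemmas
lemma wordProd_preserve_low {j : ℕ} : ∀ {s : List ℕ}, (∀ k ∈ s, k ≠ j) →
    ∀ x, x ≤ j → wordProd s x ≤ j := by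
  intro s
  induction s with
  | nil => intro _ x hx; simpa using hx
  | cons k s' ih =>
      intro hs x hx
      rw [wordProd_cons]
      simp only [Equiv.Perm.mul_apply]
      have hy : wordProd s' x ≤ j := ih (fun m hm => hs m (List.mem_cons_of_mem _ hm)) x hx
      have hk : k ≠ j := hs k (by simp)
      rcases Nat.lt_or_ge k j with hkj | hkj
      · rcases sigmaT_mem_range (i := k) (x := wordProd s' x) with h | h | h <;> rw [h] <;> omega
      · have : k > j := by omega
        rw [sigmaT_apply_of_lt (by omega)]
        exact hy

lemma supp_exists_high {n : ℕ} {w : Equiv.Perm ℕ} {j : ℕ} (hj : j ∈ supp n w) :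
    1 ≤ j ∧ j ≤ n - 1 ∧ ∃ x, 1 ≤ x ∧ x ≤ j ∧ j + 1 ≤ w x := by
  obtain ⟨s, hsred, hjs⟩ := hj
  have hb := hsred.1.1 j hjs
  refine ⟨hb.1, hb.2, ?_⟩
  have hble : BruhatLE n (sigmaT j) w :=
    ⟨[j], s, isReducedWord_sigmaT hb.1 hb.2, hsred, List.singleton_sublist.mpr hjs⟩
  have hdle := bruhatLE'_dle hble
  have h1 : 1 ≤ rk (sigmaT j) j (j + 1) := by
    unfold rk
    refine Finset.card_pos.mpr ⟨j, ?_⟩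
    simp only [Finset.mem_filter, Finset.mem_Icc]
    exact ⟨⟨hb.1, le_rfl⟩, by simp⟩
  have h2 := hdle j (j + 1)
  have h3 : 1 ≤ rk w j (j + 1) := le_trans h1 h2
  have h4 : ((Finset.Icc 1 j).filter (fun x => j + 1 ≤ w x)).Nonempty := by
    rw [← Finset.card_pos]
    unfold rk at h3
    omega
  obtain ⟨x, hx⟩ := h4
  simp only [Finset.mem_filter, Finset.mem_Icc] at hx
  exact ⟨x, hx.1.1, hx.1.2, hx.2⟩

lemma supp_subset_letters {n : ℕ} {w : Equiv.Perm ℕ} {t : List ℕ} (ht : IsWord n w t) :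
    ∀ j ∈ supp n w, j ∈ t := by
  intro j hj
  by_contra hc
  obtain ⟨-, -, x, hx1, hx2, hx3⟩ := supp_exists_high hj
  have hkj : ∀ k ∈ t, k ≠ j := by
    intro k hk he
    subst he
    exact hc hk
  have : wordProd t x ≤ j := wordProd_preserve_low hkj x hx2
  rw [ht.2] at this
  omega

lemma supp_eq_letters {n : ℕ} {w : Equiv.Perm ℕ} {t : List ℕ} (ht : IsReducedWord n w t) :
    supp n w = {j | j ∈ t} := by
  ext j
  constructor
  · exact fun hj => supp_subset_letters ht.1 j hj
  · exact fun hj => ⟨t, ht, hj⟩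

lemma supp_mono {n : ℕ} {v w : Equiv.Perm ℕ} (h : BruhatLE n v w) :
    supp n v ⊆ supp n w := by
  obtain ⟨s, t, hs, ht, hsub⟩ := h
  rw [supp_eq_letters hs, supp_eq_letters ht]
  exact fun j hj => hsub.subset hj

lemma supp_finite {n : ℕ} {w : Equiv.Perm ℕ} {t : List ℕ} (ht : IsReducedWord n w t) :
    (supp n w).Finite := by
  rw [supp_eq_letters ht]
  exact t.finite_toSet

-- Section G : atoms
def AtomOf {α : Type*} (r : α → α → Prop) (bo x : α) : Prop :=
  r bo x ∧ x ≠ bo ∧ ∀ z, r z x → z = bo ∨ z = x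

lemma atomOf_transfer {α β : Type*} {ra : α → α → Prop} {rb : β → β → Prop} (e : α ≃ β)
    (he : ∀ a b, ra a b ↔ rb (e a) (e b)) (bo x : α) :
    AtomOf ra bo x ↔ AtomOf rb (e bo) (e x) := by
  constructor
  · rintro ⟨h1, h2, h3⟩
    refine ⟨(he _ _).mp h1, fun hc => h2 (e.injective hc), ?_⟩
    intro z hz
    have hz' : ra (e.symm z) x := by
      rw [he (e.symm z) x, e.apply_symm_apply]
      exact hz
    rcases h3 (e.symm z) hz' with h | h
    · left; rw [← e.apply_symm_apply z, h]
    · right; rw [← e.apply_symm_apply z, h]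
  · rintro ⟨h1, h2, h3⟩
    refine ⟨(he _ _).mpr h1, fun hc => h2 (congrArg e hc), ?_⟩
    intro z hz
    rcases h3 (e z) ((he _ _).mp hz) with h | h
    · left; exact e.injective h
    · right; exact e.injective h

def atomEquivOfIso {α β : Type*} {ra : α → α → Prop} {rb : β → β → Prop} (e : α ≃ β)
    (he : ∀ a b, ra a b ↔ rb (e a) (e b)) (bo : α) :
    {x : α // AtomOf ra bo x} ≃ {y : β // AtomOf rb (e bo) y} where
  toFun x := ⟨e x.1, (atomOf_transfer e he bo x.1).mp x.2⟩
  invFun y := ⟨e.symm y.1, by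
    apply (atomOf_transfer e he bo (e.symm y.1)).mpr
    rw [e.apply_symm_apply]
    exact y.2⟩
  left_inv x := Subtype.ext (e.symm_apply_apply x.1)
  right_inv y := Subtype.ext (e.apply_symm_apply y.1)

-- Bruhat atoms
lemma supp_bruhatLE' {n : ℕ} {w : Equiv.Perm ℕ} {j : ℕ} (hj : j ∈ supp n w) :
    BruhatLE n (sigmaT j) w := by
  obtain ⟨s, hs, hjs⟩ := hj
  have hb := hs.1.1 j hjs
  exact ⟨[j], s, isReducedWord_sigmaT hb.1 hb.2, hs, List.singleton_sublist.mpr hjs⟩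

lemma ideal_atom_iff {n : ℕ} {w : Equiv.Perm ℕ} {tw : List ℕ} (htw : IsReducedWord n w tw)
    (x : IdealB n w) :
    AtomOf (IdealLE n w) ⟨1, bruhatLE'_one htw⟩ x ↔ ∃ j, j ∈ supp n w ∧ x.1 = sigmaT j := by
  constructor
  · rintro ⟨hb, hne, hmin⟩
    have hx1 : x.1 ≠ 1 := by
      intro h
      exact hne (Subtype.ext h)
    obtain ⟨s, t', hs, ht', hsub⟩ := x.2
    cases s with
    | nil =>
        exfalso
        apply hx1
        rw [← hs.1.2]
        rfl
    | cons j s' =>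
        have hbj := hs.1.1 j (by simp)
        have hjx : BruhatLE n (sigmaT j) x.1 :=
          ⟨[j], j :: s', isReducedWord_sigmaT hbj.1 hbj.2, hs,
            List.singleton_sublist.mpr (by simp)⟩
        have hzw : BruhatLE n (sigmaT j) w := bruhatLE'_trans hjx x.2
        rcases hmin ⟨sigmaT j, hzw⟩ hjx with h | h
        · exfalso
          exact sigmaT_ne_one j (congrArg Subtype.val h)
        · have hxj : x.1 = sigmaT j := (congrArg Subtype.val h).symm
          obtain ⟨s'', t'', hs'', ht'', hsub''⟩ := hzw
          have : s'' = [j] := reducedWord_sigmaT_eq hs''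
          subst this
          exact ⟨j, ⟨t'', ht'', hsub''.subset (by simp)⟩, hxj⟩
  · rintro ⟨j, hj, hxj⟩
    obtain ⟨sx, tx, hsx, htx, hsubx⟩ := x.2
    refine ⟨bruhatLE'_one hsx, ?_, ?_⟩
    · intro h
      apply sigmaT_ne_one j
      rw [← hxj]
      exact congrArg Subtype.val h
    · intro z hz
      have hz' : BruhatLE n z.1 (sigmaT j) := by rw [← hxj]; exact hz
      obtain ⟨sz, t', hsz, ht', hsub⟩ := hz'
      have ht'j : t' = [j] := reducedWord_sigmaT_eq ht'
      subst ht'j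
      rcases List.sublist_cons_iff.mp hsub with hc | ⟨r, hr, hrs⟩
      · left
        apply Subtype.ext
        rw [List.sublist_nil.mp hc] at hsz
        rw [← hsz.1.2]
        rfl
      · right
        apply Subtype.ext
        rw [List.sublist_nil.mp hrs] at hr
        rw [hr] at hsz
        rw [← hsz.1.2, hxj]
        simp [wordProd]
  
noncomputable def suppAtomEquiv {n : ℕ} {w : Equiv.Perm ℕ} {tw : List ℕ}
    (htw : IsReducedWord n w tw) :
    ↑(supp n w) ≃ {x : IdealB n w // AtomOf (IdealLE n w) ⟨1, bruhatLE'_one htw⟩ x} := by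
  apply Equiv.ofBijective
    (fun j => (⟨⟨sigmaT j.1, supp_bruhatLE' j.2⟩,
      (ideal_atom_iff htw _).mpr ⟨j.1, j.2, rfl⟩⟩ :
      {x : IdealB n w // AtomOf (IdealLE n w) ⟨1, bruhatLE'_one htw⟩ x}))
  constructor
  · intro a b hab
    have : sigmaT a.1 = sigmaT b.1 := congrArg (fun y => y.1.1) hab
    exact Subtype.ext (sigmaT_inj this)
  · intro x
    obtain ⟨j, hj, hxj⟩ := (ideal_atom_iff htw x.1).mp x.2
    exact ⟨⟨j, hj⟩, Subtype.ext (Subtype.ext hxj.symm)⟩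

-- product atoms
section ProdAtoms
variable {X : Type*} {rX : X → X → Prop}

lemma prod_atom_iff (hrefl : ∀ x, rX x x) (hanti : ∀ {x y}, rX x y → rX y x → x = y)
    (x₀ : X) (hbot : ∀ x, rX x₀ x) (p : Bool × X) :
    AtomOf (fun p q : Bool × X => (p.1 ≤ q.1) ∧ rX p.2 q.2) (false, x₀) p ↔
      (p = (true, x₀) ∨ (p.1 = false ∧ AtomOf rX x₀ p.2)) := by
  obtain ⟨b, x⟩ := p
  constructor
  · rintro ⟨h1, h2, h3⟩
    dsimp only at h1 h2 h3 ⊢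
    cases b
    · right
      refine ⟨rfl, h1.2, ?_, ?_⟩
      · intro hx
        apply h2
        rw [Prod.mk.injEq]
        exact ⟨rfl, hx⟩
      · intro y hy
        rcases h3 (false, y) ⟨le_rfl, hy⟩ with h | h
        · left; exact congrArg Prod.snd h
        · right; exact congrArg Prod.snd h
    · left
      rcases h3 (false, x) ⟨(show (false : Bool) ≤ true by decide), hrefl x⟩ with h | h
      · have hx : x = x₀ := congrArg Prod.snd h
        rw [Prod.mk.injEq]
        exact ⟨rfl, hx⟩
      · exfalso
        have : false = true := congrArg Prod.fst h
        simp at this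
  · rintro (heq | ⟨hb, ha1, ha2, ha3⟩)
    · rw [heq]
      refine ⟨⟨(show (false : Bool) ≤ true by decide), hrefl x₀⟩, ?_, ?_⟩
      · intro h
        have : true = false := congrArg Prod.fst h
        simp at this
      · rintro ⟨zb, zx⟩ ⟨hz1, hz2⟩
        dsimp only at hz1 hz2
        have hzx : zx = x₀ := hanti hz2 (hbot zx)
        subst hzx
        cases zb
        · left; rfl
        · right; rfl
    · dsimp only at hb ha1 ha2 ha3
      subst hb
      refine ⟨⟨le_rfl, ha1⟩, ?_, ?_⟩
      · intro h
        exact ha2 (congrArg Prod.snd h)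
      · rintro ⟨zb, zx⟩ ⟨hz1, hz2⟩
        dsimp only at hz1 hz2
        have hzb : zb = false := by
          cases zb
          · rfl
          · exact absurd hz1 (by decide)
        subst hzb
        rcases ha3 zx hz2 with h | h
        · left
          rw [Prod.mk.injEq]
          exact ⟨rfl, h⟩
        · right
          rw [Prod.mk.injEq]
          exact ⟨rfl, h⟩

noncomputable def prodAtomEquiv (hrefl : ∀ x, rX x x) (hanti : ∀ {x y}, rX x y → rX y x → x = y)
    (x₀ : X) (hbot : ∀ x, rX x₀ x) :
    Option {x : X // AtomOf rX x₀ x} ≃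
      {p : Bool × X // AtomOf (fun p q : Bool × X => (p.1 ≤ q.1) ∧ rX p.2 q.2) (false, x₀) p} := by
  apply Equiv.ofBijective (fun o => match o with
    | none => ⟨(true, x₀), (prod_atom_iff hrefl hanti x₀ hbot _).mpr (Or.inl rfl)⟩
    | some x => ⟨(false, x.1), (prod_atom_iff hrefl hanti x₀ hbot _).mpr (Or.inr ⟨rfl, x.2⟩)⟩)
  constructor
  · intro o1 o2 h
    match o1, o2 with
    | none, none => rfl
    | none, some x =>
        exfalso
        have : (true, x₀) = ((false, x.1) : Bool × X) := congrArg Subtype.val h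
        have := congrArg Prod.fst this
        simp at this
    | some x, none =>
        exfalso
        have : (false, x.1) = ((true, x₀) : Bool × X) := congrArg Subtype.val h
        have := congrArg Prod.fst this
        simp at this
    | some x, some y =>
        have : x.1 = y.1 := congrArg (fun p => p.1.2) h
        rw [Subtype.ext this]
  · intro p
    rcases (prod_atom_iff hrefl hanti x₀ hbot p.1).mp p.2 with h | ⟨hb, ha⟩
    · exact ⟨none, Subtype.ext h.symm⟩
    · refine ⟨some ⟨p.1.2, ha⟩, Subtype.ext ?_⟩
      show (false, p.1.2) = p.1
      exact Prod.ext hb.symm rfl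

end ProdAtoms

lemma bool_eq_true_of_true_le {b : Bool} (h : true ≤ b) : b = true := by
  cases b
  · exact absurd h (by decide)
  · rfl

lemma bool_eq_false_of_le_false {b : Bool} (h : b ≤ false) : b = false := by
  cases b
  · rfl
  · exact absurd h (by decide)

lemma idealLE_partialOrder (n : ℕ) (v : Equiv.Perm ℕ) :
    IsPartialOrder (IdealB n v) (IdealLE n v) := by
  refine { refl := ?_, trans := ?_, antisymm := ?_ }
  · intro a
    obtain ⟨s, t, hs, ht, hsub⟩ := a.2
    exact bruhatLE'_refl hs
  · intro a b c h1 h2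
    exact bruhatLE'_trans h1 h2
  · intro a b h1 h2
    exact Subtype.ext (bruhatLE'_antisymm h1 h2)


/-- Lemma: prism iff B(w) ≅ C₂ × B(v) for a coatom v obtained by
deleting a single letter i, with supp(w) \ supp(v) = {i}. -/
theorem prism_iff_exists_factor (n : ℕ) (w : Equiv.Perm ℕ) (hw : MemSymm n w) :
    IsPrism n w ↔
      ∃ (v : Equiv.Perm ℕ) (i : ℕ), MemSymm n v ∧ 1 ≤ i ∧ i ≤ n - 1 ∧
        BruhatLE n v w ∧
        supp n w \ supp n v = {i} ∧
        (∃ a b : List ℕ, IsReducedWord n w (a ++ i :: b) ∧ IsReducedWord n v (a ++ b)) ∧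
        IsoC2TimesIdeal n w v := by
  constructor
  · -- forward direction
    rintro ⟨X, rX, hPO, e, he⟩
    have hrefl : ∀ x, rX x x := fun x => hPO.toIsPreorder.toRefl.refl x
    have hanti : ∀ {x y}, rX x y → rX y x → x = y := fun h1 h2 =>
      hPO.toAntisymm.antisymm _ _ h1 h2
    obtain ⟨tw, htw⟩ := exists_reducedWord hw
    set wI : IdealB n w := ⟨w, bruhatLE'_refl htw⟩ with hwI
    set botI : IdealB n w := ⟨1, bruhatLE'_one htw⟩ with hbotI
    have htop : ∀ u : IdealB n w, IdealLE n w u wI := fun u => u.2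
    have hbotle : ∀ u : IdealB n w, IdealLE n w botI u := by
      intro u
      obtain ⟨s, t, hs, ht, hsub⟩ := u.2
      exact bruhatLE'_one hs
    -- top of the product
    have hmax : ∀ q : Bool × X, (q.1 ≤ (e wI).1 ∧ rX q.2 (e wI).2) := by
      intro q
      have := (he (e.symm q) wI).mp (htop _)
      rwa [e.apply_symm_apply] at this
    have hp₁1 : (e wI).1 = true := bool_eq_true_of_true_le (hmax (true, (e wI).2)).1
    set x₁ := (e wI).2 with hx₁def
    have hx₁ : ∀ x, rX x x₁ := fun x => (hmax (false, x)).2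
    have hep₁ : e wI = (true, x₁) := Prod.ext hp₁1 rfl
    -- bottom of the product
    have hmin : ∀ q : Bool × X, ((e botI).1 ≤ q.1 ∧ rX (e botI).2 q.2) := by
      intro q
      have := (he botI (e.symm q)).mp (hbotle _)
      rwa [e.apply_symm_apply] at this
    have hp₀1 : (e botI).1 = false := bool_eq_false_of_le_false (hmin (false, (e botI).2)).1
    set x₀ := (e botI).2 with hx₀def
    have hx₀ : ∀ x, rX x₀ x := fun x => (hmin (false, x)).2
    have hep₀ : e botI = (false, x₀) := Prod.ext hp₀1 rfl
    -- the coatom v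
    set vI : IdealB n w := e.symm (false, x₁) with hvI
    set v := vI.1 with hv
    have hvwB : BruhatLE n v w := vI.2
    have hevI : e vI = (false, x₁) := e.apply_symm_apply _
    have hvne : v ≠ w := by
      intro h
      have h2 : vI = wI := Subtype.ext h
      rw [h2, hep₁] at hevI
      have := congrArg Prod.fst hevI
      simp at this
    have hv0 : v 0 = 0 := bruhatLE'_zero hvwB
    -- coatom property
    have hcoatom : ∀ u : Equiv.Perm ℕ, BruhatLE n u w → BruhatLE n v u → u = v ∨ u = w := by
      intro u huw hvu
      set uI : IdealB n w := ⟨u, huw⟩ with huI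
      have h1 : (false, x₁).1 ≤ (e uI).1 ∧ rX (false, x₁).2 (e uI).2 := by
        have := (he vI uI).mp hvu
        rwa [hevI] at this
      have h2 : (e uI).1 ≤ (true, x₁).1 ∧ rX (e uI).2 (true, x₁).2 := by
        have := (he uI wI).mp (htop uI)
        rwa [hep₁] at this
      have hxeq : (e uI).2 = x₁ := hanti h2.2 h1.2
      cases hb : (e uI).1
      · left
        have : e uI = (false, x₁) := Prod.ext hb hxeq
        rw [← hevI] at this
        have := e.injective this
        exact congrArg Subtype.val this
      · right
        have : e uI = (true, x₁) := Prod.ext hb hxeq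
        rw [← hep₁] at this
        have := e.injective this
        exact congrArg Subtype.val this
    -- v has colength one
    have hdlevw : DLE v w := bruhatLE'_dle hvwB
    obtain ⟨u, su, hured, hvu, huw, hlen⟩ := dle_chain htw hdlevw hv0 hvne
    have huwB : BruhatLE n u w := bruhatLE'_of_dle htw huw (isWord_zero hured.1)
    have hvuB : BruhatLE n v u := bruhatLE'_of_dle hured hvu hv0
    have hunw : u ≠ w := by
      intro h
      have h1 : su.length = nInv u := (isReducedWord_iff.mp hured).2
      have h2 : tw.length = nInv w := (isReducedWord_iff.mp htw).2
      rw [h] at h1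
      omega
    have huv : u = v := (hcoatom u huwB hvuB).resolve_right hunw
    rw [huv] at hured
    -- deletion shape
    obtain ⟨s, hsred, hssub⟩ := dle_subword htw hdlevw hv0
    have hslen : s.length + 1 = tw.length := by
      have h1 : s.length = nInv v := (isReducedWord_iff.mp hsred).2
      have h2 : su.length = nInv v := (isReducedWord_iff.mp hured).2
      omega
    obtain ⟨la, i, lb, htw_eq, hs_eq⟩ := sublist_single_deletion hssub hslen
    have hi : 1 ≤ i ∧ i ≤ n - 1 := htw.1.1 i (by rw [htw_eq]; simp)
    have hmv : MemSymm n v := isWord_memSymm hsred.1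
    -- ψ : X ≃ IdealB n v
    have hmemψ : ∀ x : X, BruhatLE n (e.symm (false, x)).1 v := by
      intro x
      have h1 : IdealLE n w (e.symm (false, x)) vI := by
        apply (he _ _).mpr
        rw [e.apply_symm_apply, hevI]
        exact ⟨le_rfl, hx₁ x⟩
      exact h1
    have hinvmem : ∀ uu : IdealB n v, BruhatLE n uu.1 w :=
      fun uu => bruhatLE'_trans uu.2 hvwB
    have hfst_false : ∀ uu : IdealB n v, (e ⟨uu.1, hinvmem uu⟩).1 = false := by
      intro uu
      have h1 : IdealLE n w ⟨uu.1, hinvmem uu⟩ vI := uu.2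
      have h2 := (he _ _).mp h1
      rw [hevI] at h2
      exact bool_eq_false_of_le_false h2.1
    set ψ : X ≃ IdealB n v := {
      toFun := fun x => ⟨(e.symm (false, x)).1, hmemψ x⟩
      invFun := fun uu => (e ⟨uu.1, hinvmem uu⟩).2
      left_inv := by
        intro x
        have h1 : (⟨(e.symm (false, x)).1, hinvmem ⟨(e.symm (false, x)).1, hmemψ x⟩⟩ :
            IdealB n w) = e.symm (false, x) := Subtype.ext rfl
        show (e ⟨(e.symm (false, x)).1, _⟩).2 = x
        rw [h1, e.apply_symm_apply]
      right_inv := by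
        intro uu
        have h2 : e ⟨uu.1, hinvmem uu⟩ = (false, (e ⟨uu.1, hinvmem uu⟩).2) :=
          Prod.ext (hfst_false uu) rfl
        apply Subtype.ext
        show (e.symm (false, (e ⟨uu.1, hinvmem uu⟩).2)).1 = uu.1
        rw [← h2]; exact congrArg Subtype.val (e.symm_apply_apply ⟨uu.1, hinvmem uu⟩)
    } with hψdef
    have hψ : ∀ x y : X, rX x y ↔ IdealLE n v (ψ x) (ψ y) := by
      intro x y
      have h1 : IdealLE n v (ψ x) (ψ y) ↔ IdealLE n w (e.symm (false, x)) (e.symm (false, y)) :=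
        Iff.rfl
      rw [h1, he (e.symm (false, x)) (e.symm (false, y)), e.apply_symm_apply, e.apply_symm_apply]
      constructor
      · intro h; exact ⟨le_rfl, h⟩
      · intro h; exact h.2
    -- the isomorphism B(w) ≃ C₂ × B(v)
    have hiso : IsoC2TimesIdeal n w v := by
      refine ⟨e.trans (Equiv.prodCongr (Equiv.refl Bool) ψ), ?_⟩
      intro a b
      rw [he a b]
      simp only [Equiv.trans_apply, Equiv.prodCongr_apply, Equiv.coe_refl, Prod.map_fst,
        Prod.map_snd, id_eq]
      exact and_congr Iff.rfl (hψ _ _)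
    -- supports
    have hsubw : supp n w = {j | j ∈ tw} := supp_eq_letters htw
    have hsubv : supp n v = {j | j ∈ s} := supp_eq_letters hsred
    have hsuppmono : supp n v ⊆ supp n w := supp_mono hvwB
    have hiw : i ∈ supp n w := by rw [hsubw, htw_eq]; simp
    have hwsub : ∀ j ∈ supp n w, j ∈ supp n v ∨ j = i := by
      intro j hj
      rw [hsubw, htw_eq] at hj
      simp only [Set.mem_setOf_eq, List.mem_append, List.mem_cons] at hj
      rw [hsubv, hs_eq]
      rcases hj with hj | hj | hj
      · left; simp [hj]
      · right; exact hj
      · left; simp [hj]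
    -- i is not in the support of v (atom counting)
    have hninv : i ∉ supp n v := by
      intro hiv
      have hse : supp n w = supp n v := by
        apply Set.Subset.antisymm _ hsuppmono
        intro j hj
        rcases hwsub j hj with h | h
        · exact h
        · rw [h]; exact hiv
      -- assemble the chain of equivalences
      have hψx₀ : ψ x₀ = (⟨1, bruhatLE'_one hsred⟩ : IdealB n v) := by
        apply Subtype.ext
        show (e.symm (false, x₀)).1 = 1
        rw [← hep₀, e.symm_apply_apply]
      have E1 := suppAtomEquiv htw
      have E2 := atomEquivOfIso (rb := fun p q : Bool × X => (p.1 ≤ q.1) ∧ rX p.2 q.2) e he botI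
      rw [hep₀] at E2
      have E3 := prodAtomEquiv hrefl (fun h1 h2 => hanti h1 h2) x₀ hx₀
      have E4 := atomEquivOfIso ψ hψ x₀
      rw [hψx₀] at E4
      have E5 := suppAtomEquiv hsred
      have C : ↑(supp n w) ≃ Option ↑(supp n v) :=
        (((E1.trans E2).trans E3.symm).trans
          (Equiv.optionCongr (E4.trans E5.symm))).trans (Equiv.refl _)
      haveI hfinv : Finite ↑(supp n v) := (supp_finite hsred).to_subtype
      have hcard := Nat.card_congr C
      rw [Finite.card_option] at hcard
      rw [hse] at hcard
      omega
    -- supp n w \ supp n v = {i}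
    have hsuppdiff : supp n w \ supp n v = {i} := by
      ext j
      simp only [Set.mem_diff, Set.mem_singleton_iff]
      constructor
      · rintro ⟨hj1, hj2⟩
        rcases hwsub j hj1 with h | h
        · exact absurd h hj2
        · exact h
      · rintro rfl
        exact ⟨hiw, hninv⟩
    refine ⟨v, i, hmv, hi.1, hi.2, hvwB, hsuppdiff, ⟨la, lb, ?_, ?_⟩, hiso⟩
    · rw [← htw_eq]; exact htw
    · rw [← hs_eq]; exact hsred
  · -- backward direction
    rintro ⟨v, i, hmv, hi1, hin, hvw, hsupp, ⟨a, b, hwred, hvred⟩, hiso⟩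
    exact ⟨IdealB n v, IdealLE n v, idealLE_partialOrder n v, hiso⟩

end
end

section
/- Let w ∈ S_n and suppose the letter i is unconfined in some reduced word of w. Then in every reduced word of w the letter i appears exactly once, and i is unconfined in every reduced word of w. -/
theorem Equiv.Perm.inv_apply_self {α : Type*} (f : Equiv.Perm α) (x : α) : f⁻¹ (f x) = x :=
  f.symm_apply_apply x

theorem Equiv.Perm.apply_inv_self {α : Type*} (f : Equiv.Perm α) (x : α) : f (f⁻¹ x) = x :=
  f.apply_symm_apply x

namespace UE

open Finset Equiv

/-! ### Basics -/

lemma sigmaT_self (j : ℕ) : sigmaT j j = j + 1 := Equiv.swap_apply_left _ _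

lemma sigmaT_succ (j : ℕ) : sigmaT j (j + 1) = j := Equiv.swap_apply_right _ _

lemma sigmaT_other {j x : ℕ} (h1 : x ≠ j) (h2 : x ≠ j + 1) : sigmaT j x = x :=
  Equiv.swap_apply_of_ne_of_ne h1 h2

lemma sigmaT_apply (j x : ℕ) : sigmaT j x = if x = j then j + 1 else if x = j + 1 then j else x := by
  unfold sigmaT; rw [Equiv.swap_apply_def]

lemma sigmaT_mul_self (j : ℕ) : sigmaT j * sigmaT j = 1 := Equiv.swap_mul_self _ _

lemma sigmaT_inv (j : ℕ) : (sigmaT j)⁻¹ = sigmaT j := Equiv.symm_swap _ _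

lemma sigmaT_lt_of_lt {j a b : ℕ} (h : a < b) (hne : ¬(a = j ∧ b = j + 1)) :
    sigmaT j a < sigmaT j b := by
  rw [sigmaT_apply, sigmaT_apply]
  split_ifs <;> omega

lemma sigmaT_lt_of_lt' {j a b : ℕ} (h : a < b) (hne : sigmaT j b < sigmaT j a) :
    a = j ∧ b = j + 1 := by
  by_contra hc
  exact absurd (sigmaT_lt_of_lt h hc) (by omega)

@[simp] lemma wordProd_nil : wordProd [] = 1 := rfl

lemma wordProd_cons (j : ℕ) (t : List ℕ) : wordProd (j :: t) = sigmaT j * wordProd t := by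
  unfold wordProd; simp

lemma wordProd_append (a b : List ℕ) : wordProd (a ++ b) = wordProd a * wordProd b := by
  unfold wordProd; simp

lemma wordProd_singleton (j : ℕ) : wordProd [j] = sigmaT j := by
  unfold wordProd; simp

lemma wordProd_reverse (s : List ℕ) : wordProd s.reverse = (wordProd s)⁻¹ := by
  induction s with
  | nil => simp
  | cons j t ih =>
      simp [List.reverse_cons, wordProd_append, wordProd_cons, ih, mul_inv_rev, sigmaT_inv]

/-- Good word for level n : all letters j satisfy 1 ≤ j and j+1 ≤ n. -/
def Good (n : ℕ) (s : List ℕ) : Prop := ∀ j ∈ s, 1 ≤ j ∧ j + 1 ≤ n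

lemma isWord_letters {n : ℕ} {w : Equiv.Perm ℕ} {s : List ℕ} (h : IsWord n w s) :
    Good n s := by
  intro j hj
  have := h.1 j hj
  omega

/-- Fixes everything outside [1, n]. -/
def FixOut (n : ℕ) (u : Equiv.Perm ℕ) : Prop := ∀ x : ℕ, x < 1 ∨ n < x → u x = x

lemma fixOut_one (n : ℕ) : FixOut n (1 : Equiv.Perm ℕ) := fun _ _ => rfl

lemma fixOut_sigmaT {n j : ℕ} (h1 : 1 ≤ j) (h2 : j + 1 ≤ n) : FixOut n (sigmaT j) := by
  intro x hx
  exact sigmaT_other (by omega) (by omega)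

lemma FixOut.mul {n : ℕ} {u v : Equiv.Perm ℕ} (hu : FixOut n u) (hv : FixOut n v) :
    FixOut n (u * v) := by
  intro x hx
  simp [Equiv.Perm.mul_apply, hv x hx, hu x hx]

lemma FixOut.inv {n : ℕ} {u : Equiv.Perm ℕ} (hu : FixOut n u) : FixOut n u⁻¹ := by
  intro x hx
  have h := hu x hx
  calc u⁻¹ x = u⁻¹ (u x) := by rw [h]
  _ = x := Equiv.Perm.inv_apply_self u x

lemma fixOut_wordProd {n : ℕ} {s : List ℕ} (h : Good n s) : FixOut n (wordProd s) := by
  induction s with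
  | nil => exact fixOut_one n
  | cons j t ih =>
      rw [wordProd_cons]
      exact (fixOut_sigmaT (h j (by simp)).1 (h j (by simp)).2).mul
        (ih fun x hx => h x (by simp [hx]))

lemma FixOut.mem_Icc {n : ℕ} {u : Equiv.Perm ℕ} (hu : FixOut n u) {x : ℕ}
    (hx : 1 ≤ x ∧ x ≤ n) : 1 ≤ u x ∧ u x ≤ n := by
  by_contra hc
  have h1 : u (u x) = u x := hu (u x) (by omega)
  have := u.injective h1
  omega

/-! ### Inversions -/

def invF (n : ℕ) (u : Equiv.Perm ℕ) : Finset (ℕ × ℕ) :=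
  (Finset.Icc 1 n ×ˢ Finset.Icc 1 n).filter fun p => p.1 < p.2 ∧ u p.2 < u p.1

noncomputable def invCount (n : ℕ) (u : Equiv.Perm ℕ) : ℕ := (invF n u).card

lemma mem_invF {n : ℕ} {u : Equiv.Perm ℕ} {x y : ℕ} :
    (x, y) ∈ invF n u ↔ (1 ≤ x ∧ x ≤ n) ∧ (1 ≤ y ∧ y ≤ n) ∧ x < y ∧ u y < u x := by
  simp only [invF, Finset.mem_filter, Finset.mem_product, Finset.mem_Icc]
  tauto

lemma invPair_mem {n : ℕ} {u : Equiv.Perm ℕ} (hu : FixOut n u) {x y : ℕ}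
    (hxy : x < y) (hinv : u y < u x) : (x, y) ∈ invF n u := by
  have hx1 : 1 ≤ x := by
    by_contra hc
    have : u x = x := hu x (by omega)
    omega
  have hyn : y ≤ n := by
    by_contra hc
    have hy : u y = y := hu y (by omega)
    rcases le_or_gt x n with h | h
    · have := hu.mem_Icc ⟨hx1, h⟩
      omega
    · have : u x = x := hu x (by omega)
      omega
  exact mem_invF.mpr ⟨⟨hx1, by omega⟩, ⟨by omega, hyn⟩, hxy, hinv⟩

lemma invCount_one (n : ℕ) : invCount n 1 = 0 := by
  unfold invCount
  rw [Finset.card_eq_zero]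
  ext ⟨x, y⟩
  simp only [mem_invF, Finset.notMem_empty, iff_false]
  rintro ⟨_, _, h1, h2⟩
  simp only [Equiv.Perm.one_apply] at h2
  omega

lemma invF_step {n j : ℕ} {u : Equiv.Perm ℕ} (hj : 1 ≤ j) (hjn : j + 1 ≤ n) (hu : FixOut n u)
    (hlt : u⁻¹ j < u⁻¹ (j + 1)) :
    (u⁻¹ j, u⁻¹ (j + 1)) ∉ invF n u ∧
      invF n (sigmaT j * u) = insert (u⁻¹ j, u⁻¹ (j + 1)) (invF n u) := by
  have hx0 : u (u⁻¹ j) = j := u.apply_inv_self j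
  have hy0 : u (u⁻¹ (j + 1)) = j + 1 := u.apply_inv_self (j + 1)
  constructor
  · intro hmem
    have := (mem_invF.mp hmem).2.2.2
    omega
  · ext ⟨x, y⟩
    simp only [mem_invF, Finset.mem_insert, Prod.mk.injEq]
    constructor
    · rintro ⟨hx, hy, hxy, hinv⟩
      simp only [Equiv.Perm.mul_apply] at hinv
      rcases lt_trichotomy (u x) (u y) with h | h | h
      · have := sigmaT_lt_of_lt' h hinv
        left
        constructor
        · rw [← this.1]; exact (u.inv_apply_self x).symm
        · rw [← this.2]; exact (u.inv_apply_self y).symm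
      · exact absurd (u.injective h) (by omega)
      · exact Or.inr ⟨hx, hy, hxy, h⟩
    · rintro (⟨hx, hy⟩ | ⟨hx, hy, hxy, hinv⟩)
      · subst hx; subst hy
        have hb1 := hu.inv.mem_Icc (x := j) ⟨hj, by omega⟩
        have hb2 := hu.inv.mem_Icc (x := j + 1) ⟨by omega, hjn⟩
        refine ⟨hb1, hb2, hlt, ?_⟩
        simp only [Equiv.Perm.mul_apply, hx0, hy0, sigmaT_self, sigmaT_succ]
        omega
      · refine ⟨hx, hy, hxy, ?_⟩
        simp only [Equiv.Perm.mul_apply]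
        apply sigmaT_lt_of_lt hinv
        rintro ⟨h1, h2⟩
        have : y = u⁻¹ j := by rw [← h1]; exact (u.inv_apply_self y).symm
        have : x = u⁻¹ (j + 1) := by rw [← h2]; exact (u.inv_apply_self x).symm
        omega

lemma invCount_step_up {n j : ℕ} {u : Equiv.Perm ℕ} (hj : 1 ≤ j) (hjn : j + 1 ≤ n)
    (hu : FixOut n u) (hlt : u⁻¹ j < u⁻¹ (j + 1)) :
    invCount n (sigmaT j * u) = invCount n u + 1 := by
  obtain ⟨hnm, heq⟩ := invF_step hj hjn hu hlt
  unfold invCount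
  rw [heq, Finset.card_insert_of_notMem hnm]

lemma invCount_step_down {n j : ℕ} {u : Equiv.Perm ℕ} (hj : 1 ≤ j) (hjn : j + 1 ≤ n)
    (hu : FixOut n u) (hlt : u⁻¹ (j + 1) < u⁻¹ j) :
    invCount n u = invCount n (sigmaT j * u) + 1 := by
  set u' := sigmaT j * u with hu'
  have hfix : FixOut n u' := (fixOut_sigmaT hj hjn).mul hu
  have h1 : u'⁻¹ j = u⁻¹ (j + 1) := by
    rw [hu', mul_inv_rev, sigmaT_inv]
    simp only [Equiv.Perm.mul_apply, sigmaT_self]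
  have h2 : u'⁻¹ (j + 1) = u⁻¹ j := by
    rw [hu', mul_inv_rev, sigmaT_inv]
    simp only [Equiv.Perm.mul_apply, sigmaT_succ]
  have h3 : sigmaT j * u' = u := by
    rw [hu', ← mul_assoc, sigmaT_mul_self, one_mul]
  have := invCount_step_up hj hjn hfix (by rw [h1, h2]; exact hlt)
  rw [h3] at this
  omega

lemma invCount_le_length {n : ℕ} {s : List ℕ} (h : Good n s) :
    invCount n (wordProd s) ≤ s.length := by
  induction s with
  | nil => simp [wordProd_nil, invCount_one]
  | cons j t ih =>
      have hj := h j (by simp)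
      have ht : Good n t := fun x hx => h x (by simp [hx])
      have hfix := fixOut_wordProd ht
      have iht := ih ht
      rw [wordProd_cons]
      set u := wordProd t
      rcases lt_trichotomy (u⁻¹ j) (u⁻¹ (j + 1)) with hc | hc | hc
      · have := invCount_step_up hj.1 hj.2 hfix hc
        simp only [List.length_cons]
        omega
      · exact absurd (u⁻¹.injective hc) (by omega)
      · have := invCount_step_down hj.1 hj.2 hfix hc
        simp only [List.length_cons]
        omega

lemma no_descent_id {n : ℕ} {u : Equiv.Perm ℕ} (hu : FixOut n u)
    (h : ∀ j, 1 ≤ j → j + 1 ≤ n → u j < u (j + 1)) : u = 1 := by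
  have key : ∀ k, 1 ≤ k → k ≤ n → k ≤ u k := by
    intro k
    induction k with
    | zero => omega
    | succ m ihm =>
        intro _ hkn
        rcases Nat.eq_zero_or_pos m with hm | hm
        · subst hm
          simp only [Nat.zero_add]
          have h0 : u 0 = 0 := hu 0 (by omega)
          have : u 1 ≠ 0 := by
            intro hc
            exact absurd (u.injective (hc.trans h0.symm)) (by omega)
          omega
        · have := ihm hm (by omega)
          have := h m hm (by omega)
          omega
  have himg : Finset.image (fun x => u x) (Finset.Icc 1 n) = Finset.Icc 1 n := by
    apply Finset.eq_of_subset_of_card_le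
    · intro y hy
      obtain ⟨x, hx, hxy⟩ := Finset.mem_image.mp hy
      rw [Finset.mem_Icc] at hx ⊢
      rw [← hxy]
      exact hu.mem_Icc hx
    · rw [Finset.card_image_of_injective _ u.injective]
  have hsum : ∑ k ∈ Finset.Icc 1 n, u k = ∑ k ∈ Finset.Icc 1 n, k := by
    conv_rhs => rw [← himg]
    rw [Finset.sum_image (fun a _ b _ hab => u.injective hab)]
  have hall : ∀ k ∈ Finset.Icc 1 n, u k = k := by
    by_contra hc
    push_neg at hc
    obtain ⟨k0, hk0, hne⟩ := hc
    have hlt : ∑ k ∈ Finset.Icc 1 n, k < ∑ k ∈ Finset.Icc 1 n, u k := by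
      apply Finset.sum_lt_sum
      · intro k hk
        rw [Finset.mem_Icc] at hk
        exact key k hk.1 hk.2
      · refine ⟨k0, hk0, ?_⟩
        rw [Finset.mem_Icc] at hk0
        have := key k0 hk0.1 hk0.2
        omega
    omega
  ext x
  simp only [Equiv.Perm.one_apply]
  rcases le_or_gt x n with hx | hx
  · rcases Nat.eq_zero_or_pos x with h0 | h0
    · subst h0; exact hu 0 (by omega)
    · exact hall x (Finset.mem_Icc.mpr ⟨h0, hx⟩)
  · exact hu x (by omega)

lemma exists_descent {n : ℕ} {u : Equiv.Perm ℕ} (hu : FixOut n u) (hne : u ≠ 1) :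
    ∃ j, 1 ≤ j ∧ j + 1 ≤ n ∧ u (j + 1) < u j := by
  by_contra hc
  push_neg at hc
  apply hne
  apply no_descent_id hu
  intro j hj hjn
  have h1 := hc j hj hjn
  have h2 : u j ≠ u (j + 1) := fun he => absurd (u.injective he) (by omega)
  omega

lemma exists_bubble {n : ℕ} : ∀ m (w : Equiv.Perm ℕ), FixOut n w → invCount n w = m →
    ∃ s, Good n s ∧ wordProd s = w ∧ s.length = invCount n w := by
  intro m
  induction m using Nat.strong_induction_on with
  | _ m ih =>
      intro w hw hm
      rcases eq_or_ne w 1 with h1 | h1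
      · subst h1
        exact ⟨[], by intro j hj; simp at hj, wordProd_nil, by simp [invCount_one]⟩
      · obtain ⟨j, hj, hjn, hdesc⟩ := exists_descent hw.inv (fun hc => h1 (by
          rw [← inv_inv w, hc, inv_one]))
        have hdn := invCount_step_down hj hjn hw hdesc
        set w' := sigmaT j * w with hw'def
        have hfix' : FixOut n w' := (fixOut_sigmaT hj hjn).mul hw
        have hlt : invCount n w' < m := by omega
        obtain ⟨s', hg', hp', hl'⟩ := ih _ hlt w' hfix' rfl
        refine ⟨j :: s', ?_, ?_, ?_⟩
        · intro x hx
          rcases List.mem_cons.mp hx with h | h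
          · subst h; exact ⟨hj, hjn⟩
          · exact hg' x h
        · rw [wordProd_cons, hp', hw'def, ← mul_assoc, sigmaT_mul_self, one_mul]
        · simp only [List.length_cons, hl']
          omega

lemma length_eq_invCount {n : ℕ} {w : Equiv.Perm ℕ} {s : List ℕ}
    (hs : IsReducedWord n w s) : s.length = invCount n w := by
  have hg := isWord_letters hs.1
  have hfix : FixOut n w := hs.1.2 ▸ fixOut_wordProd hg
  have h1 : invCount n w ≤ s.length := hs.1.2 ▸ invCount_le_length hg
  obtain ⟨t, hgt, hpt, hlt⟩ := exists_bubble (invCount n w) w hfix rfl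
  have : s.length ≤ t.length := hs.2 t ⟨fun j hj => by have := hgt j hj; omega, hpt⟩
  omega

lemma reduced_of_length {n : ℕ} {w : Equiv.Perm ℕ} {s : List ℕ}
    (hs : IsWord n w s) (hl : s.length = invCount n w) : IsReducedWord n w s := by
  refine ⟨hs, fun t ht => ?_⟩
  have : invCount n w ≤ t.length := ht.2 ▸ invCount_le_length (isWord_letters ht)
  omega

lemma suffix_reduced {n : ℕ} {w : Equiv.Perm ℕ} {s u t : List ℕ}
    (hs : IsReducedWord n w s) (h : s = u ++ t) : IsReducedWord n (wordProd t) t := by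
  constructor
  · exact ⟨fun j hj => hs.1.1 j (by rw [h]; exact List.mem_append_right u hj), rfl⟩
  · intro t' ht'
    have hw : IsWord n w (u ++ t') := by
      constructor
      · intro j hj
        rcases List.mem_append.mp hj with hj | hj
        · exact hs.1.1 j (by rw [h]; exact List.mem_append_left t hj)
        · exact ht'.1 j hj
      · rw [wordProd_append, ht'.2, ← wordProd_append, ← h, hs.1.2]
    have := hs.2 _ hw
    rw [h] at this
    simp only [List.length_append] at this
    omega

lemma prefix_reduced {n : ℕ} {w : Equiv.Perm ℕ} {s u t : List ℕ}
    (hs : IsReducedWord n w s) (h : s = u ++ t) : IsReducedWord n (wordProd u) u := by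
  constructor
  · exact ⟨fun j hj => hs.1.1 j (by rw [h]; exact List.mem_append_left t hj), rfl⟩
  · intro u' hu'
    have hw : IsWord n w (u' ++ t) := by
      constructor
      · intro j hj
        rcases List.mem_append.mp hj with hj | hj
        · exact hu'.1 j hj
        · exact hs.1.1 j (by rw [h]; exact List.mem_append_right u hj)
      · rw [wordProd_append, hu'.2, ← wordProd_append, ← h, hs.1.2]
    have := hs.2 _ hw
    rw [h] at this
    simp only [List.length_append] at this
    omega

/-- The key creation lemma: in a reduced word, at the occurrence of letter `j`,
the two wires about to cross are in increasing order. -/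
lemma creation {n : ℕ} {w : Equiv.Perm ℕ} {s u t : List ℕ} {j : ℕ}
    (hs : IsReducedWord n w s) (h : s = u ++ j :: t) :
    (wordProd t)⁻¹ j < (wordProd t)⁻¹ (j + 1) := by
  have hjs : j ∈ s := by rw [h]; exact List.mem_append_right u (by simp)
  have hj := hs.1.1 j hjs
  have hj1 : 1 ≤ j := hj.1
  have hjn : j + 1 ≤ n := by omega
  have ht : IsReducedWord n (wordProd t) t :=
    suffix_reduced hs (show s = (u ++ [j]) ++ t by simp [h])
  have hjt : IsReducedWord n (wordProd (j :: t)) (j :: t) := suffix_reduced hs h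
  have hlt : t.length = invCount n (wordProd t) := length_eq_invCount ht
  have hljt : t.length + 1 = invCount n (wordProd (j :: t)) := by
    have := length_eq_invCount hjt
    simpa using this
  set v := wordProd t
  have hfix : FixOut n v := fixOut_wordProd (isWord_letters ht.1)
  rcases lt_trichotomy (v⁻¹ j) (v⁻¹ (j + 1)) with hc | hc | hc
  · exact hc
  · exact absurd (v⁻¹.injective hc) (by omega)
  · exfalso
    have := invCount_step_down hj1 hjn hfix hc
    rw [← wordProd_cons] at this
    omega

/-! ### Persistence of inversions -/

lemma persist_aux {n : ℕ} {w : Equiv.Perm ℕ} {s : List ℕ} (hs : IsReducedWord n w s) :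
    ∀ u t x y, s = u ++ t → x < y → wordProd t y < wordProd t x → w y < w x := by
  intro u
  induction u using List.reverseRecOn with
  | nil =>
      intro t x y h hxy hinv
      simp only [List.nil_append] at h
      subst h
      rw [← hs.1.2]
      exact hinv
  | append_singleton us j ih =>
      intro t x y h hxy hinv
      have h' : s = us ++ (j :: t) := by simpa [List.append_assoc] using h
      apply ih (j :: t) x y h' hxy
      have hc := creation hs h'
      rw [wordProd_cons]
      set v := wordProd t
      simp only [Equiv.Perm.mul_apply]
      apply sigmaT_lt_of_lt hinv
      rintro ⟨h1, h2⟩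
      have hy : y = v⁻¹ j := by rw [← h1]; exact (v.inv_apply_self y).symm
      have hx : x = v⁻¹ (j + 1) := by rw [← h2]; exact (v.inv_apply_self x).symm
      omega

lemma persist {n : ℕ} {w : Equiv.Perm ℕ} {s t : List ℕ} {x y : ℕ}
    (hs : IsReducedWord n w s) (ht : t <:+ s) (hxy : x < y)
    (hinv : wordProd t y < wordProd t x) : w y < w x := by
  obtain ⟨u, hu⟩ := ht
  exact persist_aux hs u t x y hu.symm hxy hinv

/-! ### The wire lemma: an inversion-free wire is never touched -/

lemma wire_free {n : ℕ} {s : List ℕ} (hs : IsReducedWord n (wordProd s) s) (z : ℕ)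
    (h1 : ∀ x, x < z → wordProd s x < wordProd s z)
    (h2 : ∀ y, z < y → wordProd s z < wordProd s y) :
    ∀ t, t <:+ s → wordProd t z = z ∧ ∀ j ∈ t, j ≠ z ∧ j + 1 ≠ z := by
  intro t
  induction t with
  | nil => intro _; exact ⟨rfl, by simp⟩
  | cons j t' ih =>
      intro hsuf
      have hsuf' : t' <:+ s := (List.suffix_cons j t').trans hsuf
      obtain ⟨hfix, hlets⟩ := ih hsuf'
      obtain ⟨u, hu⟩ := hsuf
      have hsuf2 : (j :: t') <:+ s := ⟨u, hu⟩
      have hc := creation hs hu.symm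
      set v := wordProd t' with hv
      have hjz : j ≠ z := by
        intro he
        have hvz : v⁻¹ j = z := by
          rw [he]; conv_lhs => rw [← hfix]
          exact v.inv_apply_self z
        set y := v⁻¹ (j + 1) with hy
        have hzy : z < y := by rw [← hvz]; exact hc
        have hinv : wordProd (j :: t') y < wordProd (j :: t') z := by
          rw [wordProd_cons]
          simp only [Equiv.Perm.mul_apply]
          have e1 : v y = j + 1 := v.apply_inv_self (j + 1)
          have e2 : v z = j := by rw [hfix, he]
          rw [e1, e2, sigmaT_self, sigmaT_succ]
          omega
        have := persist hs hsuf2 hzy hinv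
        exact absurd (h2 y hzy) (by omega)
      have hj1z : j + 1 ≠ z := by
        intro he
        have hvz : v⁻¹ (j + 1) = z := by
          rw [he]; conv_lhs => rw [← hfix]
          exact v.inv_apply_self z
        set x := v⁻¹ j with hx
        have hxz : x < z := by rw [← hvz]; exact hc
        have hinv : wordProd (j :: t') z < wordProd (j :: t') x := by
          rw [wordProd_cons]
          simp only [Equiv.Perm.mul_apply]
          have e1 : v x = j := v.apply_inv_self j
          have e2 : v z = j + 1 := by rw [hfix, he]
          rw [e1, e2, sigmaT_self, sigmaT_succ]
          omega
        have := persist hs hsuf2 hxz hinv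
        exact absurd (h1 x hxz) (by omega)
      constructor
      · rw [wordProd_cons]
        simp only [Equiv.Perm.mul_apply, hfix]
        exact (congrArg (sigmaT j) hfix).trans (sigmaT_other (fun hc' => hjz hc'.symm) (fun hc' => hj1z hc'.symm))
      · intro j' hj'
        rcases List.mem_cons.mp hj' with h | h
        · subst h; exact ⟨hjz, hj1z⟩
        · exact hlets j' h

/-! ### Words avoiding a letter -/

lemma sigmaT_le_iff {j i x : ℕ} (hj : j ≠ i) : sigmaT j x ≤ i ↔ x ≤ i := by
  rw [sigmaT_apply]; split_ifs <;> omega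

lemma side_pres {i : ℕ} {l : List ℕ} (h : ∀ j ∈ l, j ≠ i) (x : ℕ) :
    wordProd l x ≤ i ↔ x ≤ i := by
  induction l generalizing x with
  | nil => simp
  | cons j t ih =>
      rw [wordProd_cons]
      simp only [Equiv.Perm.mul_apply]
      rw [sigmaT_le_iff (h j (by simp))]
      exact ih (fun j' hj' => h j' (by simp [hj'])) x

lemma side_pres_inv {i : ℕ} {B : Equiv.Perm ℕ} (hB : ∀ x, B x ≤ i ↔ x ≤ i) (x : ℕ) :
    B⁻¹ x ≤ i ↔ x ≤ i := by
  have := hB (B⁻¹ x)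
  rw [B.apply_inv_self] at this
  exact this.symm

lemma perm_inv_eq_self_iff {u : Equiv.Perm ℕ} {x : ℕ} : u⁻¹ x = x ↔ u x = x := by
  constructor
  · intro h
    have := congrArg u h
    rw [u.apply_inv_self] at this
    exact this.symm
  · intro h
    have := congrArg (fun y => u⁻¹ y) h
    rw [u.inv_apply_self] at this
    exact this.symm

lemma fix_of_avoid {z : ℕ} {l : List ℕ} (h : ∀ j ∈ l, j ≠ z ∧ j + 1 ≠ z) :
    wordProd l z = z := by
  induction l with
  | nil => rfl
  | cons j t ih =>
      rw [wordProd_cons]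
      simp only [Equiv.Perm.mul_apply]
      rw [ih (fun j' hj' => h j' (by simp [hj']))]
      have := h j (by simp)
      exact sigmaT_other (fun hc => this.1 hc.symm) (fun hc => this.2 hc.symm)

/-! ### Facts about a reduced word with a single occurrence of `i` -/

lemma decomp_facts {n : ℕ} {w : Equiv.Perm ℕ} {s a b : List ℕ} {i : ℕ}
    (hs : IsReducedWord n w s) (hdec : s = a ++ i :: b)
    (hia : i ∉ a) (hib : i ∉ b) (hi : 1 ≤ i) :
    ((wordProd b)⁻¹ i ≤ i) ∧ (i < (wordProd b)⁻¹ (i + 1)) ∧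
    (i < w ((wordProd b)⁻¹ i)) ∧ (w ((wordProd b)⁻¹ (i + 1)) ≤ i) ∧
    (∀ x, x ≤ i → x ≠ (wordProd b)⁻¹ i → w x ≤ i) ∧
    (∀ y, i < y → y ≠ (wordProd b)⁻¹ (i + 1) → i < w y) ∧
    ((i + 1) ∈ a ↔ w ((wordProd b)⁻¹ i) ≠ i + 1) ∧
    ((i + 1) ∈ b ↔ (wordProd b)⁻¹ (i + 1) ≠ i + 1) ∧
    ((i - 1) ∈ a ↔ w ((wordProd b)⁻¹ (i + 1)) ≠ i) ∧
    ((i - 1) ∈ b ↔ (wordProd b)⁻¹ i ≠ i) := by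
  set B := wordProd b with hBdef
  set A := wordProd a with hAdef
  set p := B⁻¹ i with hpdef
  set q := B⁻¹ (i + 1) with hqdef
  have hla : ∀ j ∈ a, j ≠ i := fun j hj he => hia (he ▸ hj)
  have hlb : ∀ j ∈ b, j ≠ i := fun j hj he => hib (he ▸ hj)
  have hA : ∀ x, A x ≤ i ↔ x ≤ i := side_pres hla
  have hB : ∀ x, B x ≤ i ↔ x ≤ i := side_pres hlb
  have hBinv : ∀ x, B⁻¹ x ≤ i ↔ x ≤ i := side_pres_inv hB
  have hweq : ∀ x, w x = A (sigmaT i (B x)) := by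
    intro x
    rw [← hs.1.2, hdec, wordProd_append, wordProd_cons]
    simp [Equiv.Perm.mul_apply]; rfl
  have hBp : B p = i := B.apply_inv_self i
  have hBq : B q = i + 1 := B.apply_inv_self (i + 1)
  have hp_le : p ≤ i := (hBinv i).mpr le_rfl
  have hq_gt : i < q := by
    have := (hBinv (i + 1)).not
    omega
  have hwp : w p = A (i + 1) := by rw [hweq, hBp, sigmaT_self]
  have hwq : w q = A i := by rw [hweq, hBq, sigmaT_succ]
  have hwp_gt : i < w p := by
    rw [hwp]
    have := (hA (i + 1)).not
    omega
  have hwq_le : w q ≤ i := by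
    rw [hwq]
    exact (hA i).mpr le_rfl
  have hother1 : ∀ x, x ≤ i → x ≠ p → w x ≤ i := by
    intro x hx hxp
    have hBx : B x ≤ i := (hB x).mpr hx
    have hBxi : B x ≠ i := by
      intro he
      exact hxp (by rw [hpdef, ← he, B.inv_apply_self])
    rw [hweq, sigmaT_other hBxi (by omega)]
    exact (hA _).mpr hBx
  have hother2 : ∀ y, i < y → y ≠ q → i < w y := by
    intro y hy hyq
    have hBy : ¬ B y ≤ i := by rw [hB]; omega
    have hByi : B y ≠ i + 1 := by
      intro he
      exact hyq (by rw [hqdef, ← he, B.inv_apply_self])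
    rw [hweq, sigmaT_other (by omega) hByi]
    rw [← Nat.not_le, hA]
    omega
  have hared : IsReducedWord n (wordProd a) a := prefix_reduced hs hdec
  have hbred : IsReducedWord n (wordProd b) b :=
    suffix_reduced hs (show s = (a ++ [i]) ++ b by simp [hdec])
  have Ea1 : (i + 1) ∈ a ↔ w p ≠ i + 1 := by
    rw [hwp]
    constructor
    · intro hmem he
      have hfree := wire_free hared (i + 1) ?_ ?_ a (List.suffix_refl a)
      · exact (hfree.2 (i + 1) hmem).1 rfl
      · intro x hx
        rw [← hAdef]
        have : A x ≤ i := (hA x).mpr (by omega)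
        omega
      · intro y hy
        rw [← hAdef]
        have h1 : ¬ A y ≤ i := by rw [hA]; omega
        have h2 : A y ≠ i + 1 := by
          intro hc
          have := A.injective (hc.trans he.symm)
          omega
        omega
    · intro hne
      by_contra hmem
      exact hne (fix_of_avoid (fun j hj => ⟨fun he => hmem (he ▸ hj), fun he =>
        hla j hj (by omega)⟩))
  have Eb1 : (i + 1) ∈ b ↔ q ≠ i + 1 := by
    have hqiff : q = i + 1 ↔ B (i + 1) = i + 1 := perm_inv_eq_self_iff
    rw [Ne, hqiff]
    constructor
    · intro hmem he
      have hfree := wire_free hbred (i + 1) ?_ ?_ b (List.suffix_refl b)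
      · exact (hfree.2 (i + 1) hmem).1 rfl
      · intro x hx
        rw [← hBdef]
        have : B x ≤ i := (hB x).mpr (by omega)
        omega
      · intro y hy
        rw [← hBdef]
        have h1 : ¬ B y ≤ i := by rw [hB]; omega
        have h2 : B y ≠ i + 1 := by
          intro hc
          have := B.injective (hc.trans he.symm)
          omega
        omega
    · intro hne
      by_contra hmem
      exact hne (fix_of_avoid (fun j hj => ⟨fun he => hmem (he ▸ hj), fun he =>
        hlb j hj (by omega)⟩))
  have Ea2 : (i - 1) ∈ a ↔ w q ≠ i := by
    rw [hwq]
    constructor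
    · intro hmem he
      have hfree := wire_free hared i ?_ ?_ a (List.suffix_refl a)
      · exact (hfree.2 (i - 1) hmem).2 (by omega)
      · intro x hx
        rw [← hAdef]
        have h1 : A x ≤ i := (hA x).mpr (by omega)
        have h2 : A x ≠ i := by
          intro hc
          have := A.injective (hc.trans he.symm)
          omega
        omega
      · intro y hy
        rw [← hAdef]
        have : ¬ A y ≤ i := by rw [hA]; omega
        omega
    · intro hne
      by_contra hmem
      exact hne (fix_of_avoid (fun j hj => ⟨hla j hj, fun he => hmem (by
        have hje : j = i - 1 := by omega
        exact hje ▸ hj)⟩))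
  have Eb2 : (i - 1) ∈ b ↔ p ≠ i := by
    have hpiff : p = i ↔ B i = i := perm_inv_eq_self_iff
    rw [Ne, hpiff]
    constructor
    · intro hmem he
      have hfree := wire_free hbred i ?_ ?_ b (List.suffix_refl b)
      · exact (hfree.2 (i - 1) hmem).2 (by omega)
      · intro x hx
        rw [← hBdef]
        have h1 : B x ≤ i := (hB x).mpr (by omega)
        have h2 : B x ≠ i := by
          intro hc
          have := B.injective (hc.trans he.symm)
          omega
        omega
      · intro y hy
        rw [← hBdef]
        have : ¬ B y ≤ i := by rw [hB]; omega
        omega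
    · intro hne
      by_contra hmem
      exact hne (fix_of_avoid (fun j hj => ⟨hlb j hj, fun he => hmem (by
        have hje : j = i - 1 := by omega
        exact hje ▸ hj)⟩))
  exact ⟨hp_le, hq_gt, hwp_gt, hwq_le, hother1, hother2, Ea1, Eb1, Ea2, Eb2⟩

/-! ### Counting lemma, case `w i = i + 1` -/

lemma count_one_of_up {n : ℕ} {w : Equiv.Perm ℕ} {i q : ℕ} (hi : 1 ≤ i)
    (hwi : w i = i + 1)
    (hlow : ∀ x, x < i → w x ≤ i)
    (hq : i < q) (huniq : ∀ y, i < y → w y ≤ i → y = q)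
    {s : List ℕ} (hs : IsReducedWord n w s) : s.count i = 1 := by
  have hws : wordProd s = w := hs.1.2
  have key : ∀ t, t <:+ s →
      (t.count i = 0 ∧ wordProd t i = i) ∨
      (t.count i = 1 ∧ wordProd t i = i + 1 ∧ wordProd t q ≤ i) := by
    intro t
    induction t with
    | nil => intro _; exact Or.inl ⟨by simp, rfl⟩
    | cons j t' ih =>
        intro hsuf
        have hsuf' : t' <:+ s := (List.suffix_cons j t').trans hsuf
        obtain ⟨u0, hu0⟩ := hsuf
        have hsuf2 : (j :: t') <:+ s := ⟨u0, hu0⟩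
        have hc := creation hs hu0.symm
        set v := wordProd t' with hv
        have hcons : ∀ x, wordProd (j :: t') x = sigmaT j (v x) := by
          intro x
          rw [wordProd_cons]
          simp [Equiv.Perm.mul_apply]; rfl
        rcases ih hsuf' with ⟨hcnt, hfix⟩ | ⟨hcnt, hval, hqval⟩
        · -- state 1
          rcases eq_or_ne j i with hji | hji
          · -- transition to state 2
            subst hji
            have hvinv : v⁻¹ j = j := by rw [perm_inv_eq_self_iff]; exact hfix
            set y := v⁻¹ (j + 1) with hy
            have hjy : j < y := by rw [← hvinv]; exact hc
            have hinv : wordProd (j :: t') y < wordProd (j :: t') j := by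
              rw [hcons, hcons, hfix, v.apply_inv_self, sigmaT_self, sigmaT_succ]
              omega
            have hper := persist hs hsuf2 hjy hinv
            rw [hwi] at hper
            have hyq : y = q := huniq y hjy (by omega)
            refine Or.inr ⟨by simp [hcnt], by rw [hcons, hfix, sigmaT_self], ?_⟩
            rw [← hyq, hcons, v.apply_inv_self, sigmaT_succ]
          · rcases eq_or_ne (j + 1) i with hji1 | hji1
            · -- letter i-1 touching the wire: impossible
              exfalso
              have hvinv : v⁻¹ (j + 1) = i := by
                rw [hji1, perm_inv_eq_self_iff]; exact hfix
              set x := v⁻¹ j with hx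
              have hxi : x < i := by rw [← hvinv]; exact hc
              have hinv : wordProd (j :: t') i < wordProd (j :: t') x := by
                rw [hcons, hcons, hfix, v.apply_inv_self]
                rw [← hji1, sigmaT_self, sigmaT_succ]
                omega
              have hper := persist hs hsuf2 hxi hinv
              rw [hwi] at hper
              have := hlow x hxi
              omega
            · -- stay in state 1
              refine Or.inl ⟨by simp [List.count_cons, hcnt, hji], ?_⟩
              rw [hcons, hfix]
              exact sigmaT_other (Ne.symm hji) (Ne.symm hji1)
        · -- state 2
          rcases eq_or_ne j i with hji | hji
          · -- second occurrence of i: impossible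
            exfalso
            subst hji
            have hvinv : v⁻¹ (j + 1) = j := by
              have := congrArg (fun z => v⁻¹ z) hval
              rw [v.inv_apply_self] at this
              exact this.symm
            set x := v⁻¹ j with hx
            have hxj : x < j := by rw [← hvinv]; exact hc
            have hinv : wordProd (j :: t') j < wordProd (j :: t') x := by
              rw [hcons, hcons, hval, v.apply_inv_self, sigmaT_self, sigmaT_succ]
              omega
            have hper := persist hs hsuf2 hxj hinv
            rw [hwi] at hper
            have := hlow x hxj
            omega
          · rcases eq_or_ne j (i + 1) with hji1 | hji1
            · -- letter i+1 touching the wire: impossible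
              exfalso
              subst hji1
              have hvinv : v⁻¹ (i + 1) = i := by
                have := congrArg (fun z => v⁻¹ z) hval
                rw [v.inv_apply_self] at this
                exact this.symm
              set y := v⁻¹ (i + 1 + 1) with hy
              have hiy : i < y := by rw [← hvinv]; exact hc
              have hinv : wordProd ((i + 1) :: t') y < wordProd ((i + 1) :: t') i := by
                rw [hcons, hcons, hval, v.apply_inv_self, sigmaT_self, sigmaT_succ]
                omega
              have hper := persist hs hsuf2 hiy hinv
              rw [hwi] at hper
              have hyq : y = q := huniq y hiy (by omega)
              -- but v q ≤ i while v y = i + 2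
              have : v y = i + 1 + 1 := v.apply_inv_self _
              rw [hyq] at this
              omega
            · -- stay in state 2
              refine Or.inr ⟨by simp [List.count_cons, hcnt, hji], ?_, ?_⟩
              · rw [hcons, hval]
                exact sigmaT_other (fun hc' => hji (by omega)) (fun hc' => hji1 (by omega))
              · rw [hcons, sigmaT_apply]
                split_ifs <;> omega
  rcases key s (List.suffix_refl s) with ⟨hcnt, hfix⟩ | ⟨hcnt, _, _⟩
  · rw [hws, hwi] at hfix
    omega
  · exact hcnt

/-! ### Counting lemma, case of a single short crossing -/

noncomputable def phi (i : ℕ) (u : Equiv.Perm ℕ) : ℕ := ∑ v ∈ Finset.Icc 1 i, u⁻¹ v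

lemma Icc_split {i : ℕ} (hi : 1 ≤ i) :
    Finset.Icc 1 i = insert i (Finset.Icc 1 (i - 1)) := by
  ext v
  simp only [Finset.mem_Icc, Finset.mem_insert]
  omega

lemma not_mem_Icc_pred {i : ℕ} : i ∉ Finset.Icc 1 (i - 1) := by
  simp only [Finset.mem_Icc]
  omega

lemma not_mem_Icc_pred' {i : ℕ} : i + 1 ∉ Finset.Icc 1 (i - 1) := by
  simp only [Finset.mem_Icc]
  omega

lemma mul_inv_apply (j : ℕ) (u : Equiv.Perm ℕ) (v : ℕ) :
    (sigmaT j * u)⁻¹ v = u⁻¹ (sigmaT j v) := by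
  rw [mul_inv_rev, sigmaT_inv]
  rfl

lemma phi_step_ne {i j : ℕ} (hj : 1 ≤ j) (hji : j ≠ i) (u : Equiv.Perm ℕ) :
    phi i (sigmaT j * u) = phi i u := by
  unfold phi
  have h1 : ∀ v, (sigmaT j * u)⁻¹ v = u⁻¹ (sigmaT j v) := fun v => mul_inv_apply j u v
  simp only [h1]
  rcases lt_or_gt_of_ne hji with h | h
  · exact Equiv.Perm.sum_comp (sigmaT j) (Finset.Icc 1 i) (fun v => u⁻¹ v)
      (by
        intro a ha
        simp only [Set.mem_setOf_eq] at ha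
        have hor : a = j ∨ a = j + 1 := by
          by_contra hc
          push_neg at hc
          exact ha (sigmaT_other hc.1 hc.2)
        simp only [Finset.coe_Icc, Set.mem_Icc]
        omega)
  · apply Finset.sum_congr rfl
    intro v hv
    simp only [Finset.mem_Icc] at hv
    rw [sigmaT_other (by omega) (by omega)]

lemma phi_step_i {i : ℕ} (hi : 1 ≤ i) (u : Equiv.Perm ℕ) :
    phi i (sigmaT i * u) + u⁻¹ i = phi i u + u⁻¹ (i + 1) := by
  unfold phi
  simp only [mul_inv_apply]
  rw [Icc_split hi, Finset.sum_insert not_mem_Icc_pred, Finset.sum_insert not_mem_Icc_pred,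
    sigmaT_self]
  have hco : ∀ v ∈ Finset.Icc 1 (i - 1), u⁻¹ (sigmaT i v) = u⁻¹ v := by
    intro v hv
    simp only [Finset.mem_Icc] at hv
    rw [sigmaT_other (by omega) (by omega)]
  rw [show (∑ v ∈ Finset.Icc 1 (i - 1), u⁻¹ (sigmaT i v)) =
      ∑ v ∈ Finset.Icc 1 (i - 1), u⁻¹ v from Finset.sum_congr rfl hco]
  omega

lemma count_one_of_cross {n : ℕ} {w : Equiv.Perm ℕ} {i : ℕ} (hi : 1 ≤ i)
    (h0 : w 0 = 0)
    (hlow : ∀ x, 1 ≤ x → x < i → w x ≤ i)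
    (hqi : i < w i)
    (hq1 : w (i + 1) ≤ i)
    (hhigh : ∀ y, i + 2 ≤ y → i < w y)
    {s : List ℕ} (hs : IsReducedWord n w s) : s.count i = 1 := by
  have hws : wordProd s = w := hs.1.2
  set phi0 := ∑ v ∈ Finset.Icc 1 i, v with hphi0
  have hphi_one : phi i 1 = phi0 := by
    unfold phi
    simp [hphi0]
  -- the invariant
  have key : ∀ t, t <:+ s →
      phi0 + t.count i ≤ phi i (wordProd t) ∧ (t.count i = 0 → phi i (wordProd t) = phi0) := by
    intro t
    induction t with
    | nil =>
        intro _
        refine ⟨?_, fun _ => ?_⟩ <;> simp [wordProd_nil, hphi_one]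
    | cons j t' ih =>
        intro hsuf
        have hsuf' : t' <:+ s := (List.suffix_cons j t').trans hsuf
        obtain ⟨u0, hu0⟩ := hsuf
        have hjs : j ∈ s := by
          rw [← hu0]
          exact List.mem_append_right u0 (by simp)
        have hj1 : 1 ≤ j := (hs.1.1 j hjs).1
        obtain ⟨ih1, ih2⟩ := ih hsuf'
        set u := wordProd t' with hu
        rcases eq_or_ne j i with hji | hji
        · subst hji
          have hc := creation hs hu0.symm
          rw [← hu] at hc
          have hstep := phi_step_i hj1 u
          rw [wordProd_cons, ← hu]
          constructor
          · have : phi j u + 1 ≤ phi j (sigmaT j * u) := by omega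
            have hcnt : (j :: t').count j = t'.count j + 1 := by
              simp [List.count_cons]
            rw [hcnt]
            omega
          · intro hcnt
            simp [List.count_cons] at hcnt
        · rw [wordProd_cons, phi_step_ne hj1 hji u]
          have hcnt : (j :: t').count i = t'.count i := by
            simp [List.count_cons, hji]
          rw [hcnt]
          exact ⟨ih1, ih2⟩
  -- compute phi at the top
  have hwinj := w.injective
  have himg : Finset.image (fun v => w⁻¹ v) (Finset.Icc 1 i) =
      insert (i + 1) (Finset.Icc 1 (i - 1)) := by
    apply Finset.Subset.antisymm
    · intro x hx
      obtain ⟨v, hv, hvx⟩ := Finset.mem_image.mp hx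
      simp only [Finset.mem_Icc] at hv
      have hwx : w x = v := by rw [← hvx]; exact w.apply_inv_self v
      simp only [Finset.mem_insert, Finset.mem_Icc]
      have hx0 : x ≠ 0 := by
        intro hc
        rw [hc, h0] at hwx
        omega
      have hxi : x ≠ i := by
        intro hc
        rw [hc] at hwx
        omega
      by_cases hxe : x = i + 1
      · left; exact hxe
      · right
        have : ¬ (i + 2 ≤ x) := by
          intro hc
          have := hhigh x hc
          omega
        omega
    · intro x hx
      simp only [Finset.mem_insert, Finset.mem_Icc] at hx
      rw [Finset.mem_image]
      rcases hx with hx | hx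
      · refine ⟨w (i + 1), ?_, by rw [hx, w.inv_apply_self]⟩
        simp only [Finset.mem_Icc]
        have : w (i + 1) ≠ 0 := by
          intro hc
          have := hwinj (hc.trans h0.symm)
          omega
        omega
      · refine ⟨w x, ?_, by rw [w.inv_apply_self]⟩
        simp only [Finset.mem_Icc]
        have h1 := hlow x hx.1 (by omega)
        have : w x ≠ 0 := by
          intro hc
          have := hwinj (hc.trans h0.symm)
          omega
        omega
  have hphiw : phi i w = phi0 + 1 := by
    have hval : phi i w = ∑ x ∈ Finset.image (fun v => w⁻¹ v) (Finset.Icc 1 i), x := by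
      unfold phi
      rw [Finset.sum_image (fun x _ y _ h => w⁻¹.injective h)]
    rw [hval, himg, Finset.sum_insert not_mem_Icc_pred', hphi0, Icc_split hi,
      Finset.sum_insert not_mem_Icc_pred]
    omega
  obtain ⟨k1, k2⟩ := key s (List.suffix_refl s)
  rw [hws, hphiw] at k1 k2
  rcases Nat.eq_zero_or_pos (s.count i) with hc | hc
  · have := k2 hc
    omega
  · omega

/-! ### Reversal -/

lemma reduced_reverse {n : ℕ} {w : Equiv.Perm ℕ} {s : List ℕ} (hs : IsReducedWord n w s) :
    IsReducedWord n w⁻¹ s.reverse := by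
  constructor
  · exact ⟨fun j hj => hs.1.1 j (List.mem_reverse.mp hj), by rw [wordProd_reverse, hs.1.2]⟩
  · intro t ht
    have hwt : IsWord n w t.reverse :=
      ⟨fun j hj => ht.1 j (List.mem_reverse.mp hj), by rw [wordProd_reverse, ht.2, inv_inv]⟩
    have := hs.2 _ hwt
    simpa using this

lemma count_split {i : ℕ} {s : List ℕ} (h : s.count i = 1) :
    ∃ a b, s = a ++ i :: b ∧ i ∉ a ∧ i ∉ b := by
  have hmem : i ∈ s := by
    by_contra hc
    rw [List.count_eq_zero_of_not_mem hc] at h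
    omega
  obtain ⟨a, b, hab⟩ := List.append_of_mem hmem
  subst hab
  have hc : a.count i + (b.count i + 1) = 1 := by
    simpa [List.count_append, List.count_cons] using h
  exact ⟨a, b, rfl, List.count_eq_zero.mp (by omega), List.count_eq_zero.mp (by omega)⟩

lemma not_mem_parts {i : ℕ} {s a b : List ℕ} (h : s.count i = 1) (hdec : s = a ++ i :: b) :
    i ∉ a ∧ i ∉ b := by
  subst hdec
  have hc : a.count i + (b.count i + 1) = 1 := by
    simpa [List.count_append, List.count_cons] using h
  exact ⟨List.count_eq_zero.mp (by omega), List.count_eq_zero.mp (by omega)⟩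

end UE

/- STATEMENT 3: if i is unconfined in some reduced word of w, then i appears exactly once
in every reduced word of w and is unconfined in every reduced word of w. -/
open UE in
/-- if i is unconfined in some reduced word of w, then i appears exactly once
in every reduced word of w and is unconfined in every reduced word of w. -/
theorem unconfined_everywhere (n : ℕ) (w : Equiv.Perm ℕ) (hw : MemSymm n w) (i : ℕ)
    (h : ∃ s : List ℕ, IsReducedWord n w s ∧ Unconfined i s) :
    ∀ s : List ℕ, IsReducedWord n w s → Unconfined i s := by
  obtain ⟨s₀, hs₀, hcnt₀, hcond₀⟩ := h
  have hmem₀ : i ∈ s₀ := by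
    by_contra hc
    rw [List.count_eq_zero_of_not_mem hc] at hcnt₀
    omega
  have hi : 1 ≤ i := (hs₀.1.1 i hmem₀).1
  obtain ⟨a₀, b₀, hdec₀, hia₀, hib₀⟩ := count_split hcnt₀
  obtain ⟨hp_le, hq_gt, hwp_gt, hwq_le, hother1, hother2, Ea1, Eb1, Ea2, Eb2⟩ :=
    decomp_facts hs₀ hdec₀ hia₀ hib₀ hi
  set p := (wordProd b₀)⁻¹ i with hpdef
  set q := (wordProd b₀)⁻¹ (i + 1) with hqdef
  have hC := hcond₀ a₀ b₀ hdec₀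
  have hC1 : w p = i + 1 ∨ q = i + 1 := by
    by_contra hc
    push_neg at hc
    exact hC.1 ⟨Ea1.mpr hc.1, Eb1.mpr hc.2⟩
  have hC2 : w q = i ∨ p = i := by
    by_contra hc
    push_neg at hc
    exact hC.2 ⟨Ea2.mpr hc.1, Eb2.mpr hc.2⟩
  have U1 : ∀ x, x ≤ i → i < w x → x = p := by
    intro x hx hwx
    by_contra hc
    exact absurd (hother1 x hx hc) (by omega)
  have U2 : ∀ y, i < y → w y ≤ i → y = q := by
    intro y hy hwy
    by_contra hc
    exact absurd (hother2 y hy hc) (by omega)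
  have hw0 : w 0 = 0 := hw 0 (by simp [Set.mem_Icc])
  have hw0inv : w⁻¹ 0 = 0 := by
    have := w.inv_apply_self 0
    rwa [hw0] at this
  have hwinj := w.injective
  -- every reduced word contains `i` exactly once
  have hcount : ∀ s, IsReducedWord n w s → s.count i = 1 := by
    intro s hs
    rcases hC1 with h1 | h1 <;> rcases hC2 with h2 | h2
    · -- w p = i + 1 and w q = i : apply the crossing lemma to w⁻¹
      have hrev := reduced_reverse hs
      have hqi : i < w⁻¹ i := by
        have : w⁻¹ (w q) = q := w.inv_apply_self q
        rw [h2] at this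
        omega
      have hq1 : w⁻¹ (i + 1) ≤ i := by
        have : w⁻¹ (w p) = p := w.inv_apply_self p
        rw [h1] at this
        omega
      have hlow : ∀ x, 1 ≤ x → x < i → w⁻¹ x ≤ i := by
        intro x hx1 hxi
        by_contra hc
        have hz := U2 (w⁻¹ x) (by omega) (by rw [w.apply_inv_self]; omega)
        have : w q = x := by rw [← hz, w.apply_inv_self]
        omega
      have hhigh : ∀ y, i + 2 ≤ y → i < w⁻¹ y := by
        intro y hy
        by_contra hc
        push_neg at hc
        have hwz : w (w⁻¹ y) = y := w.apply_inv_self y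
        rcases eq_or_ne (w⁻¹ y) p with he | he
        · rw [he, h1] at hwz
          omega
        · have := hother1 (w⁻¹ y) hc he
          omega
      have := count_one_of_cross hi hw0inv hlow hqi hq1 hhigh hrev
      rwa [List.count_reverse] at this
    · -- w p = i + 1 and p = i : w i = i + 1
      have hwi : w i = i + 1 := by rw [h2] at h1; exact h1
      have hlow : ∀ x, x < i → w x ≤ i := fun x hx => hother1 x (by omega) (by omega)
      exact count_one_of_up hi hwi hlow hq_gt U2 hs
    · -- q = i + 1 and w q = i : w (i + 1) = i, apply the up lemma to w⁻¹
      have hrev := reduced_reverse hs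
      have hwi1 : w (i + 1) = i := by rw [h1] at h2; exact h2
      have hwi : w⁻¹ i = i + 1 := by
        have : w⁻¹ (w (i + 1)) = i + 1 := w.inv_apply_self (i + 1)
        rwa [hwi1] at this
      have hlow : ∀ x, x < i → w⁻¹ x ≤ i := by
        intro x hx
        by_contra hc
        have hz := U2 (w⁻¹ x) (by omega) (by rw [w.apply_inv_self]; omega)
        have : w q = x := by rw [← hz, w.apply_inv_self]
        omega
      have huniq : ∀ y, i < y → w⁻¹ y ≤ i → y = w p := by
        intro y hy hyle
        have hz := U1 (w⁻¹ y) hyle (by rw [w.apply_inv_self]; omega)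
        rw [← hz, w.apply_inv_self]
      have := count_one_of_up hi hwi hlow hwp_gt huniq hrev
      rwa [List.count_reverse] at this
    · -- q = i + 1 and p = i : the crossing lemma for w
      have hlow : ∀ x, 1 ≤ x → x < i → w x ≤ i := fun x hx1 hxi =>
        hother1 x (by omega) (by omega)
      have hqi : i < w i := by have hx := hwp_gt; rw [h2] at hx; exact hx
      have hq1 : w (i + 1) ≤ i := by have hx := hwq_le; rw [h1] at hx; exact hx
      have hhigh : ∀ y, i + 2 ≤ y → i < w y := fun y hy =>
        hother2 y (by omega) (by omega)
      exact count_one_of_cross hi hw0 hlow hqi hq1 hhigh hs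
  -- conclusion
  intro s hs
  have hc1 : s.count i = 1 := hcount s hs
  refine ⟨hc1, ?_⟩
  intro a b hdec
  obtain ⟨hia, hib⟩ := not_mem_parts hc1 hdec
  obtain ⟨hp_le', hq_gt', hwp_gt', hwq_le', _, _, Ea1', Eb1', Ea2', Eb2'⟩ :=
    decomp_facts hs hdec hia hib hi
  set p' := (wordProd b)⁻¹ i with hp'def
  set q' := (wordProd b)⁻¹ (i + 1) with hq'def
  have hpp : p' = p := U1 p' hp_le' hwp_gt'
  have hqq : q' = q := U2 q' hq_gt' hwq_le'
  constructor
  · rintro ⟨hma, hmb⟩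
    have e1 := Ea1'.mp hma
    have e2 := Eb1'.mp hmb
    rw [hpp] at e1
    rw [hqq] at e2
    rcases hC1 with hh | hh
    · exact e1 hh
    · exact e2 hh
  · rintro ⟨hma, hmb⟩
    have e1 := Ea2'.mp hma
    have e2 := Eb2'.mp hmb
    rw [hqq] at e1
    rw [hpp] at e2
    rcases hC2 with hh | hh
    · exact e1 hh
    · exact e2 hh
end
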